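/- arXiv:1501.05284 — 12 statements merged into one kernel-verified Lean document; each statement's English description precedes it below -/
import Mathlib

section
/- If κ is an infinite cardinal and C is a well-ordered chain (under refinement) of partitions of κ with order type α, then the cardinality of α is at most κ. -/
/-- If κ is an infinite cardinal and `C` is a well-ordered chain (under refinement)
of partitions of κ (formalized as setoids on a type `α` of cardinality κ) with order
type `o`, then `|o| ≤ κ`. -/
theorem stmt_0 {α : Type u} (hα : Cardinal.aleph0 ≤ Cardinal.mk α)
    (C : Set (Setoid α)) (hC : IsChain (· ≤ ·) C)
    (hwo : IsWellOrder C (· < ·)) :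
    (@Ordinal.type C (· < ·) hwo).card ≤ Cardinal.mk α := by
  rw [Ordinal.card_type]
  set S : Set ↥C := {c | ∃ d, c < d} with hSdef
  have hcompl : (Sᶜ : Set ↥C).Subsingleton := by
    intro x hx y hy
    by_contra hne
    rcases @trichotomous_of _ _ ⟨hwo.trichotomous⟩ x y with h | h | h
    · exact hx ⟨y, h⟩
    · exact hne h
    · exact hy ⟨x, h⟩
  have wf := hwo.toIsWellFounded.wf
  let nxt : ↥S → ↥C := fun c => wf.min {x | (c : ↥C) < x} c.2
  have hnxt_mem : ∀ c : ↥S, (c : ↥C) < nxt c := fun c => wf.min_mem _ c.2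
  have hnxt_min : ∀ (c : ↥S) (x : ↥C), (c : ↥C) < x → ¬ x < nxt c :=
    fun c x hx => wf.not_lt_min {x | (c : ↥C) < x} hx
  have hwit : ∀ c : ↥S, ∃ p : α × α,
      ((nxt c : ↥C) : Setoid α) p.1 p.2 ∧
      ¬ (((c : ↥C) : Setoid α)) p.1 p.2 := by
    intro c
    have hlt : (((c : ↥C) : Setoid α)) < ((nxt c : ↥C) : Setoid α) := hnxt_mem c
    have hnle : ¬ ((nxt c : ↥C) : Setoid α) ≤ ((c : ↥C) : Setoid α) := hlt.not_ge
    rw [Setoid.le_def] at hnle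
    push_neg at hnle
    obtain ⟨a, b, h1, h2⟩ := hnle
    exact ⟨(a, b), h1, h2⟩
  choose f hf1 hf2 using hwit
  have hfinj : Function.Injective f := by
    intro c1 c2 heq
    by_contra hne
    have hne' : (c1 : ↥C) ≠ (c2 : ↥C) := fun h => hne (Subtype.ext h)
    have key : ∀ d1 d2 : ↥S, (d1 : ↥C) < (d2 : ↥C) → f d1 = f d2 → False := by
      intro d1 d2 hlt heq2
      have h12 : ¬ (d2 : ↥C) < nxt d1 := hnxt_min d1 _ hlt
      have hle : ((nxt d1 : ↥C) : Setoid α) ≤ ((d2 : ↥C) : Setoid α) := by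
        rcases @trichotomous_of _ _ ⟨hwo.trichotomous⟩ (nxt d1) (d2 : ↥C) with h | h | h
        · exact le_of_lt h
        · exact le_of_eq (congrArg _ h)
        · exact absurd h h12
      have := hle (hf1 d1)
      rw [heq2] at this
      exact hf2 d2 this
    rcases @trichotomous_of _ _ ⟨hwo.trichotomous⟩ (c1 : ↥C) (c2 : ↥C) with h | h | h
    · exact key c1 c2 h heq
    · exact hne' h
    · exact key c2 c1 h heq.symm
  have h1 : Cardinal.mk ↥S ≤ Cardinal.mk (α × α) := Cardinal.mk_le_of_injective hfinj
  have h2 : Cardinal.mk (α × α) = Cardinal.mk α := by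
    rw [Cardinal.mk_prod, Cardinal.lift_id, Cardinal.mul_eq_self hα]
  have h3 : Cardinal.mk ↥(Sᶜ) ≤ 1 := Cardinal.mk_le_one_iff_set_subsingleton.2 hcompl
  calc Cardinal.mk ↥C = Cardinal.mk ↥S + Cardinal.mk ↥(Sᶜ) := (Cardinal.mk_sum_compl S).symm
    _ ≤ Cardinal.mk α + 1 := add_le_add (h1.trans h2.le) h3
    _ = Cardinal.mk α := Cardinal.add_one_eq hα
end

section
/- Let κ be an infinite cardinal. Every maximal chain in the partition lattice of κ that is well-ordered of order type α+1 satisfies |α| ≥ cf(κ), the cofinality of κ. -/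
open Cardinal Set Ordinal

-- covering lemma: if u < c and nothing strictly between, every c-class is within 3 u-classes
lemma cover_three {α : Type u} {u c : Setoid α} (h : u < c)
    (hcov : ∀ d : Setoid α, u < d → d ≤ c → d = c) :
    ∃ x y : α, ∀ z w : α, c z w → u z w ∨ (u z x ∧ u y w) ∨ (u z y ∧ u x w) := by
  obtain ⟨hle, hnle⟩ := lt_iff_le_not_ge.1 h
  rw [Setoid.le_def] at hnle
  push_neg at hnle
  obtain ⟨x, y, hxy, hnxy⟩ := hnle
  refine ⟨x, y, ?_⟩
  set R : α → α → Prop := fun a b => u a b ∨ (u a x ∧ u y b) ∨ (u a y ∧ u x b) with hR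
  have hequiv : Equivalence R := by
    constructor
    · intro a; exact Or.inl (u.refl a)
    · intro a b hab
      rcases hab with h1 | ⟨h1, h2⟩ | ⟨h1, h2⟩
      · exact Or.inl (u.symm h1)
      · exact Or.inr (Or.inr ⟨u.symm h2, u.symm h1⟩)
      · exact Or.inr (Or.inl ⟨u.symm h2, u.symm h1⟩)
    · intro a b c' hab hbc
      rcases hab with h1 | ⟨h1, h2⟩ | ⟨h1, h2⟩ <;>
        rcases hbc with h3 | ⟨h3, h4⟩ | ⟨h3, h4⟩
      · exact Or.inl (u.trans h1 h3)
      · exact Or.inr (Or.inl ⟨u.trans h1 h3, h4⟩)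
      · exact Or.inr (Or.inr ⟨u.trans h1 h3, h4⟩)
      · exact Or.inr (Or.inl ⟨h1, u.trans h2 h3⟩)
      · exact absurd (u.symm (u.trans h2 h3)) hnxy
      · exact Or.inl (u.trans h1 h4)
      · exact Or.inr (Or.inr ⟨h1, u.trans h2 h3⟩)
      · exact Or.inl (u.trans h1 h4)
      · exact absurd (u.trans h2 h3) hnxy
  have habs : u (x) y → False := hnxy
  set d : Setoid α := ⟨R, hequiv⟩ with hd
  have hdrel : ∀ a b, d a b ↔ R a b := fun a b => Iff.rfl
  have hud : u ≤ d := by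
    rw [Setoid.le_def]; intro a b hab; exact Or.inl hab
  have hdc : d ≤ c := by
    rw [Setoid.le_def]; intro a b hab
    rcases hab with h1 | ⟨h1, h2⟩ | ⟨h1, h2⟩
    · exact hle h1
    · exact c.trans (hle h1) (c.trans hxy (hle h2))
    · exact c.trans (hle h1) (c.trans (c.symm hxy) (hle h2))
  have hdu : d ≠ u := by
    intro he
    have : d x y := Or.inr (Or.inl ⟨u.refl x, u.refl y⟩)
    rw [he] at this
    exact hnxy this
  have : d = c := hcov d (lt_of_le_of_ne hud (Ne.symm hdu)) hdc
  intro z w hzw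
  rw [← this] at hzw
  exact hzw

/-- Every maximal chain in the partition lattice of an infinite cardinal κ that is
well-ordered of order type `o + 1` satisfies `cf(κ) ≤ |o|`. -/
theorem stmt_1 {α : Type u} (hα : Cardinal.aleph0 ≤ Cardinal.mk α)
    (C : Set (Setoid α)) (hC : IsMaxChain (· ≤ ·) C)
    (hwo : IsWellOrder C (· < ·)) (o : Ordinal.{u})
    (h : @Ordinal.type C (· < ·) hwo = o + 1) :
    (Cardinal.mk α).ord.cof ≤ o.card := by
  haveI := hwo
  by_contra hcon
  push_neg at hcon
  have hnea : Nonempty α := Cardinal.mk_ne_zero_iff.1 (ne_of_gt (lt_of_lt_of_le aleph0_pos hα))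
  obtain ⟨a0⟩ := hnea
  -- Big predicate
  set Big : Setoid α → Prop := fun d => ∃ z : α, #{w | d z w} = #α with hBig
  -- ⊤ belongs to C
  have htop : (⊤ : Setoid α) ∈ C := by
    have he : C = insert ⊤ C :=
      hC.2 (hC.1.insert fun b _ _ => Or.inr le_top) (Set.subset_insert _ _)
    rw [he]; exact Set.mem_insert _ _
  have hBigTop : Big ⊤ := by
    refine ⟨a0, ?_⟩
    have : {w | (⊤ : Setoid α) a0 w} = Set.univ := by
      ext w; simp [Setoid.top_def]
    rw [this, Cardinal.mk_univ]
  -- minimal element of C with a big class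
  have wf : WellFounded ((· < ·) : C → C → Prop) := hwo.toIsWellFounded.wf
  set Bset : Set C := {b : C | Big b.1} with hBset
  have hBne : Bset.Nonempty := ⟨⟨⊤, htop⟩, hBigTop⟩
  set c : C := wf.min Bset hBne with hc
  have hBigc : Big c.1 := wf.min_mem Bset hBne
  have hnotBig : ∀ b : C, b < c → ¬ Big b.1 := fun b hb hB => wf.not_lt_min Bset hB hb
  -- index type of elements below c
  rcases isEmpty_or_nonempty {b : C // b < c} with hemp | hnemp
  · -- c must be ⊥, contradiction
    have hbot : (⊥ : Setoid α) ∈ C := by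
      have he : C = insert ⊥ C :=
        hC.2 (hC.1.insert fun b _ _ => Or.inl bot_le) (Set.subset_insert _ _)
      rw [he]; exact Set.mem_insert _ _
    have hbc : (⊥ : Setoid α) = c.1 := by
      rcases eq_or_lt_of_le (bot_le : (⊥ : Setoid α) ≤ c.1) with he | hlt
      · exact he
      · exact absurd (Subtype.mk_lt_mk.2 hlt : (⟨⊥, hbot⟩ : C) < c)
          (fun hh => hemp.elim ⟨⟨⊥, hbot⟩, hh⟩)
    obtain ⟨z, hz⟩ := hBigc
    rw [← hbc] at hz
    have : {w | (⊥ : Setoid α) z w} = {z} := by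
      ext w; simp [Setoid.bot_def, eq_comm]
    rw [this, Cardinal.mk_singleton] at hz
    exact absurd hz (ne_of_lt (lt_of_lt_of_le Cardinal.one_lt_aleph0 hα))
  · set ι := {b : C // b < c} with hι
    -- the union setoid
    have htrans : ∀ {a b e : α}, (∃ i : ι, i.1.1 a b) → (∃ i : ι, i.1.1 b e) →
        ∃ i : ι, i.1.1 a e := by
      rintro a b e ⟨i, hi⟩ ⟨j, hj⟩
      rcases hC.1.total i.1.2 j.1.2 with hle | hle
      · exact ⟨j, j.1.1.trans (hle hi) hj⟩
      · exact ⟨i, i.1.1.trans hi (hle hj)⟩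
    set u : Setoid α := ⟨fun a b => ∃ i : ι, i.1.1 a b,
      ⟨fun a => ⟨Classical.arbitrary ι, (Classical.arbitrary ι).1.1.refl a⟩,
       fun ⟨i, hi⟩ => ⟨i, i.1.1.symm hi⟩,
       fun hab hbc => htrans hab hbc⟩⟩ with hu
    have hurel : ∀ a b : α, u a b ↔ ∃ i : ι, i.1.1 a b := fun a b => Iff.rfl
    have huc : u ≤ c.1 := by
      rintro a b ⟨i, hi⟩
      exact (le_of_lt (Subtype.coe_lt_coe.2 i.2)) hi
    have hbelow : ∀ e ∈ C, e < c.1 → e ≤ u := by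
      intro e he hlt a b hab
      exact ⟨⟨⟨e, he⟩, Subtype.mk_lt_mk.2 hlt⟩, hab⟩
    have humem : u ∈ C := by
      have he : C = insert u C := by
        refine hC.2 (hC.1.insert fun e heC _ => ?_) (Set.subset_insert _ _)
        rcases hC.1.total heC c.2 with hle | hle
        · rcases eq_or_lt_of_le hle with heq | hlt
          · exact Or.inl (heq ▸ huc)
          · exact Or.inr (hbelow e heC hlt)
        · exact Or.inl (huc.trans hle)
      rw [he]; exact Set.mem_insert _ _
    have hsmall : ∀ (i : ι) (z : α), #{w | i.1.1 z w} < #α := by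
      intro i z
      refine lt_of_le_of_ne (Cardinal.mk_set_le _) ?_
      intro heq
      exact hnotBig i.1 i.2 ⟨z, heq⟩
    rcases eq_or_lt_of_le huc with heq | hlt
    · -- limit case : c's relation is the union
      obtain ⟨z, hz⟩ := hBigc
      have hUn : {w | c.1 z w} = ⋃ i : ι, {w | i.1.1 z w} := by
        ext w
        simp only [Set.mem_setOf_eq, Set.mem_iUnion]
        rw [← heq]
        exact Iff.rfl
      have hcard : #α ≤ #ι * ⨆ i : ι, #{w | i.1.1 z w} := by
        rw [← hz, hUn]; exact Cardinal.mk_iUnion_le _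
      have hιo : #ι ≤ o.card := by
        have h1 : #ι = (Ordinal.typein (· < ·) c).card := Ordinal.card_typein c
        have h2 : Ordinal.typein ((· < ·) : C → C → Prop) c < o + 1 := by
          rw [← h]; exact Ordinal.typein_lt_type _ c
        rw [Ordinal.add_one_eq_succ, Order.lt_succ_iff] at h2
        rw [h1]; exact Ordinal.card_le_card h2
      have hιcof : #ι < (#α).ord.cof := lt_of_le_of_lt hιo hcon
      have hsup : (⨆ i : ι, #{w | i.1.1 z w}) < #α :=
        Ordinal.iSup_lt hιcof fun i => hsmall i z
      have hικ : #ι < #α := lt_of_lt_of_le hιcof (Ordinal.cof_ord_le _)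
      exact absurd hcard (not_le_of_gt (Cardinal.mul_lt_of_lt hα hικ hsup))
    · -- successor case : c covers u, contradiction with minimality
      have hcov : ∀ d : Setoid α, u < d → d ≤ c.1 → d = c.1 := by
        intro d hud hdc
        rcases eq_or_lt_of_le hdc with heq | hltd
        · exact heq
        · exfalso
          have hdmem : d ∈ C := by
            have he : C = insert d C := by
              refine hC.2 (hC.1.insert fun e heC _ => ?_) (Set.subset_insert _ _)
              rcases hC.1.total heC c.2 with hle | hle
              · rcases eq_or_lt_of_le hle with heq2 | hlt2
                · exact Or.inl (heq2 ▸ hdc)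
                · exact Or.inr ((hbelow e heC hlt2).trans hud.le)
              · exact Or.inl (hdc.trans hle)
            rw [he]; exact Set.mem_insert _ _
          exact absurd (hbelow d hdmem hltd) (not_le_of_gt hud)
      obtain ⟨x, y, hxyw⟩ := cover_three hlt hcov
      obtain ⟨z, hz⟩ := hBigc
      have hsub : {w | c.1 z w} ⊆ ({w | u z w} ∪ {w | u y w}) ∪ {w | u x w} := by
        intro w hw
        rcases hxyw z w hw with h1 | ⟨h1, h2⟩ | ⟨h1, h2⟩
        · exact Or.inl (Or.inl h1)
        · exact Or.inl (Or.inr h2)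
        · exact Or.inr h2
      have husmall : ∀ z' : α, #{w | u z' w} < #α := by
        intro z'
        have hui : (⟨⟨u, humem⟩, Subtype.mk_lt_mk.2 hlt⟩ : ι) = ⟨⟨u, humem⟩, _⟩ := rfl
        exact hsmall ⟨⟨u, humem⟩, Subtype.mk_lt_mk.2 hlt⟩ z'
      have : #{w | c.1 z w} < #α := by
        calc #{w | c.1 z w} ≤ #(({w | u z w} ∪ {w | u y w}) ∪ {w | u x w} : Set α) :=
              Cardinal.mk_le_mk_of_subset hsub
          _ ≤ #(({w | u z w} ∪ {w | u y w}) : Set α) + #{w | u x w} := Cardinal.mk_union_le _ _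
          _ ≤ (#{w | u z w} + #{w | u y w}) + #{w | u x w} :=
              add_le_add_left (Cardinal.mk_union_le _ _) _
          _ < #α := Cardinal.add_lt_of_lt hα
              (Cardinal.add_lt_of_lt hα (husmall z) (husmall y)) (husmall x)
      exact absurd hz (ne_of_lt this)
end

section
/- If κ is an infinite regular cardinal, then every maximal chain in the partition lattice of κ that is well-ordered of order type α satisfies |α| = κ. -/
universe u

namespace Stmt2Aux

variable {α : Type u}

/-- Merge the singleton classes of `a` and `b` (both `r`-singletons, `s`-related, and
some third element `c` has singleton `r`-class but nontrivial `s`-class):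
get a setoid strictly between `r` and `s`. -/
lemma caseA {r s : Setoid α} (hrs : r ≤ s) {a b c : α}
    (hab : a ≠ b) (hca : c ≠ a) (hcb : c ≠ b)
    (hsab : s a b)
    (hra : ∀ x, r a x → x = a) (hrb : ∀ x, r b x → x = b)
    (hrc : ∀ x, r c x → x = c)
    (hsc : ∃ y, y ≠ c ∧ s c y) :
    ∃ t : Setoid α, r < t ∧ t < s := by
  refine ⟨⟨fun x y => r x y ∨ ((x = a ∨ x = b) ∧ (y = a ∨ y = b)), ?_, ?_, ?_⟩, ?_, ?_⟩
  · exact fun x => Or.inl (r.refl' x)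
  · rintro x y (h | ⟨h1, h2⟩)
    · exact Or.inl (r.symm' h)
    · exact Or.inr ⟨h2, h1⟩
  · rintro x y z (hxy | ⟨hx, hy⟩) (hyz | ⟨hy', hz⟩)
    · exact Or.inl (r.trans' hxy hyz)
    · rcases hy' with rfl | rfl
      · exact Or.inr ⟨Or.inl (hra x (r.symm' hxy)), hz⟩
      · exact Or.inr ⟨Or.inr (hrb x (r.symm' hxy)), hz⟩
    · rcases hy with rfl | rfl
      · exact Or.inr ⟨hx, Or.inl (hra z hyz)⟩
      · exact Or.inr ⟨hx, Or.inr (hrb z hyz)⟩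
    · exact Or.inr ⟨hx, hz⟩
  · constructor
    · intro x y h; exact Or.inl h
    · intro hle
      have hab' : r a b := hle (Or.inr ⟨Or.inl rfl, Or.inr rfl⟩)
      exact hab (hra b hab').symm
  · constructor
    · rintro x y (h | ⟨hx, hy⟩)
      · exact hrs h
      · rcases hx with rfl | rfl <;> rcases hy with rfl | rfl
        · exact s.refl' _
        · exact hsab
        · exact s.symm' hsab
        · exact s.refl' _
    · intro hle
      obtain ⟨y, hyc, hscy⟩ := hsc
      have := hle (x := c) (y := y) hscy
      rcases this with h | ⟨hx, _⟩
      · exact hyc (hrc y h)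
      · rcases hx with rfl | rfl
        · exact hca rfl
        · exact hcb rfl

/-- Merge the `s`-class of `a` wholesale (where `a` has singleton `r`-class, and `c` has
singleton `r`-class, nontrivial `s`-class, and is not `s`-related to `a`). -/
lemma caseB {r s : Setoid α} (hrs : r ≤ s) {a c : α}
    (hra : ∀ x, r a x → x = a) (hrc : ∀ x, r c x → x = c)
    (hsa : ∃ y, y ≠ a ∧ s a y)
    (hsc : ∃ y, y ≠ c ∧ s c y)
    (hnca : ¬ s c a) :
    ∃ t : Setoid α, r < t ∧ t < s := by
  refine ⟨⟨fun x y => r x y ∨ (s x a ∧ s y a), ?_, ?_, ?_⟩, ?_, ?_⟩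
  · exact fun x => Or.inl (r.refl' x)
  · rintro x y (h | ⟨h1, h2⟩)
    · exact Or.inl (r.symm' h)
    · exact Or.inr ⟨h2, h1⟩
  · rintro x y z (hxy | ⟨hx, hy⟩) (hyz | ⟨hy', hz⟩)
    · exact Or.inl (r.trans' hxy hyz)
    · exact Or.inr ⟨s.trans' (hrs hxy) hy', hz⟩
    · exact Or.inr ⟨hx, s.trans' (s.symm' (hrs hyz)) hy⟩
    · exact Or.inr ⟨hx, hz⟩
  · constructor
    · intro x y h; exact Or.inl h
    · intro hle
      obtain ⟨y, hya, hsay⟩ := hsa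
      have : r a y := hle (Or.inr ⟨s.refl' a, s.symm' hsay⟩)
      exact hya (hra y this)
  · constructor
    · rintro x y (h | ⟨hx, hy⟩)
      · exact hrs h
      · exact s.trans' hx (s.symm' hy)
    · intro hle
      obtain ⟨y, hyc, hscy⟩ := hsc
      rcases hle hscy with h | ⟨hx, _⟩
      · exact hyc (hrc y h)
      · exact hnca hx

/-- If `r ≤ s` admits no strictly intermediate setoid, then at most two elements can
simultaneously have a singleton `r`-class and a nontrivial `s`-class. -/
lemma cover_two {r s : Setoid α} (hrs : r ≤ s)
    (hcov : ∀ t : Setoid α, r < t → t < s → False)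
    {a a' a'' : α} (h1 : a ≠ a') (h2 : a ≠ a'') (h3 : a' ≠ a'')
    (hra : ∀ x, r a x → x = a) (hra' : ∀ x, r a' x → x = a') (hra'' : ∀ x, r a'' x → x = a'')
    (hsa : ∃ y, y ≠ a ∧ s a y) (hsa' : ∃ y, y ≠ a' ∧ s a' y)
    (hsa'' : ∃ y, y ≠ a'' ∧ s a'' y) : False := by
  by_cases hq : s a a'
  · obtain ⟨t, ht1, ht2⟩ := caseA hrs h1 h2.symm h3.symm hq hra hra' hra'' hsa''
    exact hcov t ht1 ht2
  by_cases hq2 : s a a''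
  · obtain ⟨t, ht1, ht2⟩ := caseA hrs h2 h1.symm h3 hq2 hra hra'' hra' hsa'
    exact hcov t ht1 ht2
  by_cases hq3 : s a' a''
  · obtain ⟨t, ht1, ht2⟩ := caseA hrs h3 h1 h2 hq3 hra' hra'' hra hsa
    exact hcov t ht1 ht2
  · obtain ⟨t, ht1, ht2⟩ := caseB hrs hra hra' hsa hsa' (fun h => hq (s.symm' h))
    exact hcov t ht1 ht2

/-- The union of all members of a chain `C` that lie strictly below `c`, together with
equality, as a setoid. -/
def predS (C : Set (Setoid α)) (hch : IsChain (· ≤ ·) C) (c : Setoid α) : Setoid α where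
  r x y := x = y ∨ ∃ d ∈ C, d < c ∧ d x y
  iseqv := by
    refine ⟨fun x => Or.inl rfl, ?_, ?_⟩
    · rintro x y (rfl | ⟨d, hd, hdc, h⟩)
      · exact Or.inl rfl
      · exact Or.inr ⟨d, hd, hdc, d.symm' h⟩
    · rintro x y z (rfl | ⟨d, hd, hdc, h⟩) (rfl | ⟨e, he, hec, h'⟩)
      · exact Or.inl rfl
      · exact Or.inr ⟨e, he, hec, h'⟩
      · exact Or.inr ⟨d, hd, hdc, h⟩
      · rcases eq_or_ne d e with rfl | hne
        · exact Or.inr ⟨d, hd, hdc, d.trans' h h'⟩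
        · rcases hch hd he hne with hle | hle
          · exact Or.inr ⟨e, he, hec, e.trans' (hle h) h'⟩
          · exact Or.inr ⟨d, hd, hdc, d.trans' h (hle h')⟩

lemma predS_le {C : Set (Setoid α)} {hch : IsChain (· ≤ ·) C} {c : Setoid α} :
    predS C hch c ≤ c := by
  rintro x y (rfl | ⟨d, _, hdc, h⟩)
  · exact c.refl' x
  · exact hdc.le h

lemma le_predS {C : Set (Setoid α)} {hch : IsChain (· ≤ ·) C} {c d : Setoid α}
    (hd : d ∈ C) (hdc : d < c) : d ≤ predS C hch c :=
  fun x y h => Or.inr ⟨d, hd, hdc, h⟩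

end Stmt2Aux

open Stmt2Aux in
/-- If κ is an infinite regular cardinal, every maximal well-ordered chain in the
partition lattice of κ has order type of cardinality exactly κ. -/
theorem stmt_2 {α : Type u} (hα : Cardinal.aleph0 ≤ Cardinal.mk α)
    (hreg : (Cardinal.mk α).IsRegular)
    (C : Set (Setoid α)) (hC : IsMaxChain (· ≤ ·) C)
    (hwo : IsWellOrder C (· < ·)) :
    (@Ordinal.type C (· < ·) hwo).card = Cardinal.mk α := by
  classical
  haveI := hwo
  rw [Ordinal.card_type]
  haveI : Infinite α := Cardinal.infinite_iff.mpr hα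
  have hmem : ∀ t : Setoid α, (∀ c ∈ C, t ≤ c ∨ c ≤ t) → t ∈ C := by
    intro t ht
    have h1 : IsChain (· ≤ ·) (insert t C) := hC.1.insert (fun c hc _ => ht c hc)
    have h2 := hC.2 h1 (Set.subset_insert t C)
    rw [h2]; exact Set.mem_insert t C
  have htop : (⊤ : Setoid α) ∈ C := hmem ⊤ (fun c _ => Or.inr le_top)
  have wf : WellFounded (fun c d : C => c < d) := hwo.toIsWellFounded.wf
  obtain ⟨a0⟩ := (inferInstance : Nonempty α)
  set tc : ↥C := ⟨⊤, htop⟩ with htcdef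
  have le_tc : ∀ e : ↥C, e ≤ tc := fun e => Subtype.coe_le_coe.mp le_top
  -- upper bound
  have hub : Cardinal.mk C ≤ Cardinal.mk α := by
    have hex : ∀ c : ↥C, c ≠ tc → ∃ p : α × α, p.1 ≠ p.2 ∧ ¬ (c : Setoid α) p.1 p.2 ∧
        ∀ d : ↥C, c < d → (d : Setoid α) p.1 p.2 := by
      intro c hc
      have hA : ({d : ↥C | c < d}).Nonempty := ⟨tc, lt_of_le_of_ne (le_tc c) hc⟩
      set n := wf.min {d : ↥C | c < d} hA with hn
      have hcn : c < n := wf.min_mem _ hA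
      have hnle : ∀ d : ↥C, c < d → n ≤ d := by
        intro d hd
        rcases trichotomous_of (· < ·) n d with h | h | h
        · exact le_of_lt h
        · exact le_of_eq h
        · exact absurd h (wf.not_lt_min _ hd)
      have hlt : (c : Setoid α) < (n : Setoid α) := Subtype.coe_lt_coe.mpr hcn
      have hnlec : ¬ (n : Setoid α) ≤ (c : Setoid α) := hlt.not_ge
      have hexy : ∃ x y, (n : Setoid α) x y ∧ ¬ (c : Setoid α) x y := by
        by_contra hcon
        push_neg at hcon
        exact hnlec (fun x y h => hcon x y h)
      obtain ⟨x, y, hnxy, hcxy⟩ := hexy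
      refine ⟨(x, y), ?_, hcxy, ?_⟩
      · intro h
        have hxy : x = y := h
        exact hcxy (hxy ▸ (c : Setoid α).refl' x)
      · intro d hd
        exact (Subtype.coe_le_coe.mpr (hnle d hd)) hnxy
    choose p hp1 hp2 hp3 using hex
    let f : ↥C → α × α := fun c => if h : c = tc then (a0, a0) else p c h
    have key : ∀ c d : ↥C, c < d → f c ≠ f d := by
      intro c d hcd
      have hc : c ≠ tc := fun h => absurd hcd (by rw [h]; exact not_lt_of_ge (le_tc d))
      have hfc : f c = p c hc := dif_neg hc
      by_cases hd : d = tc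
      · have hfd : f d = (a0, a0) := by rw [hd]; exact dif_pos rfl
        intro hEq
        rw [hfc, hfd] at hEq
        exact hp1 c hc (by rw [hEq])
      · have hfd : f d = p d hd := dif_neg hd
        intro hEq
        rw [hfc, hfd] at hEq
        have hrel : (d : Setoid α) (p c hc).1 (p c hc).2 := hp3 c hc d hcd
        rw [hEq] at hrel
        exact hp2 d hd hrel
    have finj : Function.Injective f := by
      intro c d h
      rcases trichotomous_of (· < ·) c d with hlt | he | hlt
      · exact absurd h (key c d hlt)
      · exact he
      · exact absurd h.symm (key d c hlt)
    calc Cardinal.mk C ≤ Cardinal.mk (α × α) := Cardinal.mk_le_of_injective finj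
      _ = Cardinal.mk α := by
        simp only [Cardinal.mk_prod, Cardinal.lift_id]
        exact Cardinal.mul_eq_self hα
  -- lower bound
  have hlb : Cardinal.mk α ≤ Cardinal.mk C := by
    have hPne : ∀ a : α, ({c : ↥C | ∃ y, y ≠ a ∧ (c : Setoid α) a y}).Nonempty := by
      intro a
      obtain ⟨y, hy⟩ := exists_ne a
      exact ⟨tc, y, hy, trivial⟩
    let σ : α → ↥C := fun a => wf.min _ (hPne a)
    have hσP : ∀ a, ∃ y, y ≠ a ∧ ((σ a : ↥C) : Setoid α) a y := fun a => wf.min_mem _ (hPne a)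
    have hsingle : ∀ a x, (predS C hC.1 ((σ a : ↥C) : Setoid α)) a x → x = a := by
      intro a x hx
      rcases hx with rfl | ⟨d, hd, hdc, h⟩
      · rfl
      · by_contra hne
        have hmemP : (⟨d, hd⟩ : ↥C) ∈ {c : ↥C | ∃ y, y ≠ a ∧ (c : Setoid α) a y} :=
          ⟨x, hne, h⟩
        exact wf.not_lt_min _ hmemP (Subtype.coe_lt_coe.mp hdc)
    have hcov : ∀ a, ∀ t : Setoid α, predS C hC.1 ((σ a : ↥C) : Setoid α) < t →
        t < ((σ a : ↥C) : Setoid α) → False := by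
      intro a t h1 h2
      have ht : t ∈ C := by
        apply hmem
        intro c hc
        rcases hC.1.total hc (σ a).2 with hcs | hsc
        · rcases eq_or_lt_of_le hcs with rfl | hlt2
          · exact Or.inl h2.le
          · exact Or.inr ((le_predS hc hlt2).trans h1.le)
        · exact Or.inl (h2.le.trans hsc)
      exact absurd (le_predS ht h2) (not_le_of_gt h1)
    have hfib : ∀ a a' a'' : α, σ a = σ a' → σ a = σ a'' →
        a ≠ a' → a ≠ a'' → a' ≠ a'' → False := by
      intro a a' a'' e1 e2 h1 h2 h3
      refine cover_two predS_le (hcov a) h1 h2 h3 (hsingle a) ?_ ?_ (hσP a) ?_ ?_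
      · intro x hx; rw [e1] at hx; exact hsingle a' x hx
      · intro x hx; rw [e2] at hx; exact hsingle a'' x hx
      · rw [e1]; exact hσP a'
      · rw [e2]; exact hσP a''
    let e : ↥C → α := fun c => if h : ∃ a, σ a = c then Classical.choose h else a0
    have he : ∀ a : α, σ (e (σ a)) = σ a := by
      intro a
      have h : ∃ b, σ b = σ a := ⟨a, rfl⟩
      have : e (σ a) = Classical.choose h := dif_pos h
      rw [this]
      exact Classical.choose_spec h
    let g : α → ↥C ⊕ ↥C := fun a => if a = e (σ a) then Sum.inl (σ a) else Sum.inr (σ a)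
    have ginj : Function.Injective g := by
      intro a b hab
      by_cases ha : a = e (σ a) <;> by_cases hb : b = e (σ b)
      · simp only [g, if_pos ha, if_pos hb] at hab
        have hσ : σ a = σ b := Sum.inl.inj hab
        rw [ha, hb, hσ]
      · simp only [g, if_pos ha, if_neg hb] at hab
        exact absurd hab (by simp)
      · simp only [g, if_neg ha, if_pos hb] at hab
        exact absurd hab (by simp)
      · simp only [g, if_neg ha, if_neg hb] at hab
        have hσ : σ a = σ b := Sum.inr.inj hab
        by_contra hne
        have hb' : b ≠ e (σ a) := by rw [hσ]; exact hb
        exact hfib a b (e (σ a)) hσ (he a).symm hne (fun h => ha h) hb'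
    have hineq := Cardinal.mk_le_of_injective ginj
    simp only [Cardinal.mk_sum, Cardinal.lift_id] at hineq

    have hCinf : Cardinal.aleph0 ≤ Cardinal.mk C := by
      by_contra hltC
      push_neg at hltC
      exact absurd hα (not_le_of_gt (lt_of_le_of_lt hineq (Cardinal.add_lt_aleph0 hltC hltC)))
    calc Cardinal.mk α ≤ Cardinal.mk C + Cardinal.mk C := hineq
      _ = Cardinal.mk C := Cardinal.add_eq_self hCinf
  exact le_antisymm hub hlb
end

section
/- For any infinite cardinal κ, there exists a chain in the partition lattice of κ of cardinality strictly greater than κ. -/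
open Cardinal Set

universe u

/-- The "singular" setoid on `α` having `S` as one block and singletons elsewhere. -/
def diagS {α : Type u} (S : Set α) : Setoid α where
  r x y := x = y ∨ (x ∈ S ∧ y ∈ S)
  iseqv := by
    refine ⟨fun _ => Or.inl rfl, ?_, ?_⟩
    · rintro x y (rfl | ⟨hx, hy⟩)
      · exact Or.inl rfl
      · exact Or.inr ⟨hy, hx⟩
    · rintro x y z (rfl | ⟨hx, hy⟩) (rfl | ⟨hy', hz⟩)
      · exact Or.inl rfl
      · exact Or.inr ⟨hy', hz⟩
      · exact Or.inr ⟨hx, hy⟩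
      · exact Or.inr ⟨hx, hz⟩

theorem diagS_rel {α : Type u} (S : Set α) (x y : α) :
    (diagS S) x y ↔ x = y ∨ (x ∈ S ∧ y ∈ S) := Iff.rfl

theorem diagS_mono {α : Type u} {S T : Set α} (h : S ⊆ T) : diagS S ≤ diagS T := by
  rw [Setoid.le_def]
  intro x y hxy
  rcases hxy with h' | ⟨hx, hy⟩
  · exact Or.inl h'
  · exact Or.inr ⟨h hx, h hy⟩


theorem toLex_le_of_false {ι : Type u} [LinearOrder ι] [WellFoundedLT ι]
    {x y : ι → Bool} (hxy : ∀ i, x i ≠ y i → x i = false) :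
    toLex x ≤ toLex y := by
  rcases eq_or_ne x y with rfl | hne
  · exact le_rfl
  · apply le_of_lt
    obtain ⟨γ, hγ, hγmin⟩ := IsWellFounded.wf.has_min (r := ((· < ·) : ι → ι → Prop))
      {i | x i ≠ y i} (Function.ne_iff.1 hne)
    have hx : x γ = false := hxy γ hγ
    have hy : y γ = true := by
      cases hyc : y γ
      · exact absurd (hx.trans hyc.symm) hγ
      · rfl
    refine ⟨γ, fun j hj => ?_, ?_⟩
    · by_contra hj'
      exact hγmin j hj' hj
    · show x γ < y γ
      rw [hx, hy]
      exact Bool.false_lt_true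

/-- For any infinite cardinal κ, there exists a chain in the partition lattice of κ
of cardinality strictly greater than κ. -/
theorem stmt_3 {α : Type u} (hα : Cardinal.aleph0 ≤ Cardinal.mk α) :
    ∃ C : Set (Setoid α), IsChain (· ≤ ·) C ∧ Cardinal.mk α < Cardinal.mk C := by
  classical
  set κ := Cardinal.mk α with hκ
  have hne : {c : Cardinal.{u} | κ < 2 ^ c}.Nonempty := ⟨κ, Cardinal.cantor κ⟩
  set lam := sInf {c : Cardinal.{u} | κ < 2 ^ c} with hlamdef
  have hmem : κ < 2 ^ lam := csInf_mem hne
  have hlam_le : lam ≤ κ := csInf_le' (Cardinal.cantor κ)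
  have hmin : ∀ μ : Cardinal.{u}, μ < lam → 2 ^ μ ≤ κ := by
    intro μ hμ
    by_contra hc
    have : lam ≤ μ := csInf_le' (show μ ∈ {c : Cardinal.{u} | κ < 2 ^ c} from not_le.1 hc)
    exact absurd this (not_le.2 hμ)
  have hlam_inf : ℵ₀ ≤ lam := by
    by_contra h
    push_neg at h
    obtain ⟨n, hn⟩ := Cardinal.lt_aleph0.1 h
    have h2 : (2 : Cardinal.{u}) ^ (n : Cardinal.{u}) < ℵ₀ := by
      rw [Cardinal.power_natCast]
      have : ((2 ^ n : ℕ) : Cardinal.{u}) = (2 : Cardinal.{u}) ^ n := by push_cast; ring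
      rw [← this]
      exact Cardinal.nat_lt_aleph0 _
    rw [hn] at hmem
    exact absurd (hmem.trans h2) (not_lt.2 hα)
  -- the index type
  set β := lam.ord.ToType with hβ
  have hmkβ : #β = lam := by rw [hβ, Cardinal.mk_toType, Cardinal.card_ord]
  have hnomax : NoMaxOrder β := Cardinal.noMaxOrder hlam_inf
  have hlampos : (0 : Cardinal.{u}) < lam := lt_of_lt_of_le Cardinal.aleph0_pos hlam_inf
  have hnonempty : Nonempty β := Cardinal.mk_ne_zero_iff.1 (by rw [hmkβ]; exact hlampos.ne')
  -- the set of eventually-false functions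
  set D : Set (β → Bool) := {g | ∃ i : β, ∀ j : β, ¬ j < i → g j = false} with hD
  -- D has cardinality at most κ
  have hDle : #D ≤ κ := by
    have hU : D = ⋃ i : β, {g : β → Bool | ∀ j : β, ¬ j < i → g j = false} := by
      ext g
      simp [hD, Set.mem_iUnion]
    have hle : ∀ i : β, #({g : β → Bool | ∀ j : β, ¬ j < i → g j = false}) ≤ κ := by
      intro i
      have hinj : Function.Injective
          (fun g : {g : β → Bool | ∀ j : β, ¬ j < i → g j = false} =>
            (fun j : Set.Iio i => g.1 j.1)) := by
        intro g g' hgg'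
        ext j
        by_cases hj : j < i
        · exact congrFun hgg' ⟨j, hj⟩
        · rw [g.2 j hj, g'.2 j hj]
      have h1 : #({g : β → Bool | ∀ j : β, ¬ j < i → g j = false}) ≤ #(Set.Iio i → Bool) :=
        Cardinal.mk_le_of_injective hinj
      have h2 : #(Set.Iio i → Bool) = 2 ^ #(Set.Iio i) := by
        rw [Cardinal.mk_arrow]
        simp
      have h3 : #(Set.Iio i) < lam := Cardinal.mk_Iio_ord_toType i
      calc #({g : β → Bool | ∀ j : β, ¬ j < i → g j = false}) ≤ 2 ^ #(Set.Iio i) := by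
            rw [← h2]; exact h1
        _ ≤ κ := hmin _ h3
    calc #D ≤ #β * ⨆ i : β, #({g : β → Bool | ∀ j : β, ¬ j < i → g j = false}) := by
          rw [hU]; exact Cardinal.mk_iUnion_le _
      _ ≤ κ * κ := by
          apply mul_le_mul'
          · rw [hmkβ]; exact hlam_le
          · exact ciSup_le' hle
      _ = κ := Cardinal.mul_eq_self hα
  -- embed D into α
  obtain ⟨j⟩ : Nonempty (D ↪ α) := Cardinal.le_def _ _ |>.1 hDle
  -- the bottom function
  set e : β → Bool := fun _ => false with he
  have heD : e ∈ D := ⟨Classical.arbitrary β, fun _ _ => rfl⟩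
  have ebot : ∀ f : Lex (β → Bool), toLex e ≤ f :=
    fun f => toLex_le_of_false (fun i _ => rfl)
  -- separator lemma
  have key : ∀ f g : Lex (β → Bool), f < g →
      ∃ h : β → Bool, h ∈ D ∧ toLex h ≤ g ∧ f < toLex h := by
    intro f g hfg
    obtain ⟨b, hb, hfb⟩ : ∃ b : β, (∀ j : β, j < b → ofLex f j = ofLex g j)
        ∧ ofLex f b < ofLex g b := hfg
    set h : β → Bool := fun j => if j ≤ b then ofLex g j else false with hh
    obtain ⟨i, hbi⟩ := exists_gt b
    refine ⟨h, ⟨i, fun j hj => ?_⟩, ?_, ?_⟩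
    · have : ¬ j ≤ b := fun hjb => hj (lt_of_le_of_lt hjb hbi)
      simp [hh, this]
    · -- toLex h ≤ g
      exact toLex_le_of_false (fun i hi => by
        by_cases hib : i ≤ b
        · exact absurd (by simp [hh, hib]) hi
        · simp [hh, hib])
    · -- f < toLex h
      refine ⟨b, fun j' hj' => ?_, ?_⟩
      · show ofLex f j' = h j'
        rw [hb j' hj']
        simp [hh, le_of_lt hj']
      · show ofLex f b < h b
        have : h b = ofLex g b := by simp [hh]
        rw [this]
        exact hfb
  -- the map into setoids
  set Φ : Lex (β → Bool) → Setoid α :=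
    fun f => diagS (j '' {t : D | toLex t.1 ≤ f}) with hΦ
  have hmono : Monotone Φ := by
    intro f g hfg
    apply diagS_mono
    apply Set.image_mono
    intro t ht
    exact le_trans ht hfg
  have hltne : ∀ f g : Lex (β → Bool), f < g → Φ f ≠ Φ g := by
    intro f g hfg hEq
    obtain ⟨h, hD', hhg, hfh⟩ := key f g hfg
    set x := j ⟨h, hD'⟩ with hx
    set y := j ⟨e, heD⟩ with hy
    have hxy : x ≠ y := by
      intro hxy
      have : (⟨h, hD'⟩ : D) = ⟨e, heD⟩ := j.injective hxy
      have : h = e := congrArg Subtype.val this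
      have : toLex e ≤ f := ebot f
      rw [← ‹h = e›] at this
      exact absurd this (not_le.2 hfh)
    have hrelg : (Φ g) x y := by
      refine Or.inr ⟨⟨⟨h, hD'⟩, hhg, rfl⟩, ⟨⟨e, heD⟩, le_trans (ebot f) (le_of_lt hfg), rfl⟩⟩
    rw [← hEq] at hrelg
    rcases hrelg with h' | ⟨hxmem, _⟩
    · exact hxy h'
    · obtain ⟨t, ht, hjt⟩ := hxmem
      have : t = ⟨h, hD'⟩ := j.injective hjt
      rw [this] at ht
      exact absurd ht (not_le.2 hfh)
  have hinj : Function.Injective Φ := by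
    intro f g hfg
    rcases lt_trichotomy f g with h' | h' | h'
    · exact absurd hfg (hltne f g h')
    · exact h'
    · exact absurd hfg.symm (hltne g f h')
  refine ⟨Set.range Φ, ?_, ?_⟩
  · rintro _ ⟨f, rfl⟩ _ ⟨g, rfl⟩ _
    rcases le_total f g with h' | h'
    · exact Or.inl (hmono h')
    · exact Or.inr (hmono h')
  · have h1 : #(Set.range Φ) = #(Lex (β → Bool)) := Cardinal.mk_range_eq Φ hinj
    have h2 : #(Lex (β → Bool)) = 2 ^ lam := by
      rw [Cardinal.mk_congr (toLex (α := β → Bool)).symm, Cardinal.mk_arrow]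
      simp [hmkβ]
    rw [h1, h2]
    exact hmem
end

section
/- There is a maximal chain of cardinality 2^{ℵ₀} in the partition lattice of a countably infinite set. -/
open Cardinal

noncomputable def qenum : ℕ ≃ ℚ := (Denumerable.eqv ℚ).symm

noncomputable def cutSetoid (r : ℝ) : Setoid ℕ where
  r m n := m = n ∨ ((qenum m : ℝ) < r ∧ (qenum n : ℝ) < r)
  iseqv := ⟨fun _ => Or.inl rfl,
    fun h => h.elim (fun h => Or.inl h.symm) (fun h => Or.inr ⟨h.2, h.1⟩),
    fun h1 h2 => by
      rcases h1 with rfl | h1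
      · exact h2
      · rcases h2 with rfl | h2
        · exact Or.inr h1
        · exact Or.inr ⟨h1.1, h2.2⟩⟩

lemma cutSetoid_mono : Monotone cutSetoid := by
  intro r r' h
  rw [Setoid.le_def]
  rintro x y (rfl | ⟨hx, hy⟩)
  · exact Or.inl rfl
  · exact Or.inr ⟨hx.trans_le h, hy.trans_le h⟩

lemma cutSetoid_inj : Function.Injective cutSetoid := by
  intro r r' hrr
  by_contra hne
  wlog h : r < r' generalizing r r'
  · exact this hrr.symm (Ne.symm hne) (lt_of_le_of_ne (not_lt.mp h) (Ne.symm hne))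
  obtain ⟨q, hq1, hq2⟩ := exists_rat_btwn h
  obtain ⟨q', hq1', hq2'⟩ := exists_rat_btwn hq1
  have hqq : q ≠ q' := fun e => absurd (e ▸ hq2') (lt_irrefl _)
  have h1 : (cutSetoid r') (qenum.symm q) (qenum.symm q') := by
    refine Or.inr ?_
    simp only [Equiv.apply_symm_apply]
    exact ⟨hq2, hq2'.trans hq2⟩
  rw [← hrr] at h1
  rcases h1 with h1 | h1
  · exact hqq (qenum.symm.injective h1)
  · simp only [Equiv.apply_symm_apply] at h1
    exact absurd (h1.2.trans hq1') (lt_irrefl _)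

lemma mk_setoid_le : Cardinal.mk (Setoid ℕ) ≤ 2 ^ Cardinal.aleph0 := by
  have h : Function.Injective (fun s : Setoid ℕ => (s.r : ℕ → ℕ → Prop)) := by
    intro s t h
    ext x y
    exact iff_of_eq (congrFun (congrFun h x) y)
  calc Cardinal.mk (Setoid ℕ) ≤ Cardinal.mk (ℕ → ℕ → Prop) := Cardinal.mk_le_of_injective h
    _ = 2 ^ Cardinal.aleph0 := by
        simp [Cardinal.mk_arrow, ← Cardinal.power_mul]

/-- There is a maximal chain of cardinality `2 ^ ℵ₀` in the partition lattice of a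
countably infinite set. -/
theorem stmt_5 :
    ∃ C : Set (Setoid ℕ), IsMaxChain (· ≤ ·) C ∧
      Cardinal.mk C = 2 ^ Cardinal.aleph0 := by
  have hchain : IsChain (· ≤ ·) (Set.range cutSetoid) := by
    rintro _ ⟨r, rfl⟩ _ ⟨r', rfl⟩ _
    rcases le_total r r' with h | h
    · exact Or.inl (cutSetoid_mono h)
    · exact Or.inr (cutSetoid_mono h)
  obtain ⟨C, hmax, hsub⟩ := hchain.exists_maxChain
  refine ⟨C, hmax, le_antisymm ?_ ?_⟩
  · exact (Cardinal.mk_subtype_le _).trans mk_setoid_le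
  · calc (2 : Cardinal) ^ Cardinal.aleph0 = Cardinal.mk ℝ := Cardinal.mk_real.symm
      _ = Cardinal.mk (Set.range cutSetoid) := (Cardinal.mk_range_eq _ cutSetoid_inj).symm
      _ ≤ Cardinal.mk C := Cardinal.mk_le_mk_of_subset hsub
end

section
/- Let λ be an infinite cardinal and S = {0,1}^{ord(λ)} the set of binary sequences indexed by the initial ordinal of λ. For δ ≤ ord(λ), let K_δ be the partition of S whose blocks are the sets [f]_δ = {g ∈ S : g agrees with f on all positions < δ}. Then α < β ≤ ord(λ) implies K_β < K_α in the refinement order, so {K_δ : δ ≤ ord(λ)} is a chain with K_0 = ⊤ and K_{ord(λ)} = ⊥. -/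
/-- The keyframe partition `K_δ` on binary sequences indexed by the initial ordinal
of λ: two sequences are equivalent iff they agree on all positions of index `< δ`. -/
def keyframe (lam : Cardinal.{u}) (δ : Ordinal.{u}) : Setoid (lam.ord.ToType → Bool) where
  r f g := ∀ i : lam.ord.ToType,
    (@Ordinal.typein lam.ord.ToType (· < ·) isWellOrder_lt i : Ordinal) < δ → f i = g i
  iseqv := ⟨fun _ _ _ => rfl, fun h i hi => (h i hi).symm,
    fun h₁ h₂ i hi => (h₁ i hi).trans (h₂ i hi)⟩

theorem keyframe_mono (lam : Cardinal.{u}) {a b : Ordinal.{u}} (h : a ≤ b) :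
    keyframe lam b ≤ keyframe lam a := by
  rw [Setoid.le_def]
  intro f g hfg i hi
  exact hfg i (hi.trans_le h)

/-- The keyframe partitions are strictly decreasing in the refinement order,
`K_0 = ⊤`, `K_{ord(λ)} = ⊥`, and `{K_δ : δ ≤ ord(λ)}` is a chain. -/
theorem stmt_9 (lam : Cardinal.{u}) (hlam : Cardinal.aleph0 ≤ lam) :
    (∀ a b : Ordinal.{u}, a < b → b ≤ lam.ord → keyframe lam b < keyframe lam a) ∧
    keyframe lam 0 = ⊤ ∧ keyframe lam lam.ord = ⊥ ∧
    IsChain (· ≤ ·) {P : Setoid (lam.ord.ToType → Bool) | ∃ δ ≤ lam.ord, P = keyframe lam δ} := by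
  refine ⟨?_, ?_, ?_, ?_⟩
  · intro a b hab hb
    refine lt_of_le_of_ne (keyframe_mono lam hab.le) ?_
    intro heq
    have ha : a < @Ordinal.type lam.ord.ToType (· < ·) isWellOrder_lt := by
      rw [Ordinal.type_toType]; exact hab.trans_le hb
    set x : lam.ord.ToType := @Ordinal.enum lam.ord.ToType (· < ·) isWellOrder_lt ⟨a, ha⟩ with hx
    classical
    set f : lam.ord.ToType → Bool := fun _ => false with hf
    set g : lam.ord.ToType → Bool := fun i => if i = x then true else false with hg
    have h1 : (keyframe lam a) f g := by
      intro i hi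
      have hix : i ≠ x := by
        intro h; subst h
        rw [hx, Ordinal.typein_enum] at hi
        exact lt_irrefl _ hi
      simp [hf, hg, hix]
    rw [← heq] at h1
    have h2 := h1 x (by rw [hx, Ordinal.typein_enum]; exact hab)
    simp [hf, hg] at h2
  · apply Setoid.ext
    intro f g
    constructor
    · intro _; trivial
    · intro _ i hi
      exact absurd hi (not_lt_zero (a := _))
  · apply Setoid.ext
    intro f g
    constructor
    · intro h
      funext i
      exact h i (Ordinal.typein_lt_self i)
    · rintro rfl
      exact fun _ _ => rfl
  · rintro P ⟨δ₁, _, rfl⟩ Q ⟨δ₂, _, rfl⟩ _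
    rcases le_total δ₁ δ₂ with h | h
    · exact Or.inr (keyframe_mono lam h)
    · exact Or.inl (keyframe_mono lam h)
end

section
/- Let κ be an infinite cardinal and P a partition of κ with P ∉ {⊥, ⊤}. Then the number of complements of P in the partition lattice of κ is at least 2^{|P|}, where |P| is the number of blocks of P. -/
open Cardinal

/-- The set of complements of a partition `P` in the partition lattice. -/
def complements {α : Type u} (P : Setoid α) : Set (Setoid α) :=
  {Q | P ⊓ Q = ⊥ ∧ P ⊔ Q = ⊤}

namespace Stmt13Aux

variable {α : Type u}

open Classical in
/-- Map collapsing `T1` to `a`, `T2` to `b`, identity elsewhere. Its kernel is the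
partition with blocks `T1`, `T2` and singletons. -/
noncomputable def trv (T1 T2 : Set α) (a b : α) : α → α :=
  fun x => if x ∈ T1 then a else if x ∈ T2 then b else x

theorem meet_bot (P : Setoid α) (T1 T2 : Set α) (a b : α)
    (h1 : ∀ x ∈ T1, ∀ y ∈ T1, P x y → x = y)
    (h2 : ∀ x ∈ T2, ∀ y ∈ T2, P x y → x = y)
    (hd : ∀ x, x ∈ T1 → x ∉ T2)
    (ha : a ∈ T1)
    (hb : ∀ x ∈ T2, b ∈ T2)
    (hab : ∀ x ∈ T2, a ≠ b) :
    P ⊓ Setoid.ker (trv T1 T2 a b) = ⊥ := by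
  apply le_antisymm _ bot_le
  rw [Setoid.le_def]
  intro x y hxy
  rw [Setoid.inf_iff_and] at hxy
  obtain ⟨hP, hK⟩ := hxy
  have hK' : trv T1 T2 a b x = trv T1 T2 a b y := hK
  show x = y
  by_cases hx1 : x ∈ T1
  · by_cases hy1 : y ∈ T1
    · exact h1 x hx1 y hy1 hP
    · by_cases hy2 : y ∈ T2
      · exact absurd (by simpa [trv, hx1, hy1, hy2] using hK') (hab y hy2)
      · have : a = y := by simpa [trv, hx1, hy1, hy2] using hK'
        exact absurd (this ▸ ha) hy1
  · by_cases hx2 : x ∈ T2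
    · by_cases hy1 : y ∈ T1
      · exact absurd (by simpa [trv, hx1, hx2, hy1] using hK'.symm) (hab x hx2)
      · by_cases hy2 : y ∈ T2
        · exact h2 x hx2 y hy2 hP
        · have : b = y := by simpa [trv, hx1, hx2, hy1, hy2] using hK'
          exact absurd (this ▸ hb x hx2) hy2
    · by_cases hy1 : y ∈ T1
      · have : x = a := by simpa [trv, hx1, hx2, hy1] using hK'
        exact absurd (this ▸ hx1) (fun h => h ha)
      · by_cases hy2 : y ∈ T2
        · have : x = b := by simpa [trv, hx1, hx2, hy1, hy2] using hK'
          exact absurd (this ▸ hx2) (fun h => h (hb y hy2))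
        · simpa [trv, hx1, hx2, hy1, hy2] using hK'

theorem sup_top (P Q : Setoid α) (a : α) (h : ∀ x, (P ⊔ Q) x a) : P ⊔ Q = ⊤ :=
  Setoid.eq_top_iff.2 fun x y => (P ⊔ Q).trans (h x) ((P ⊔ Q).symm (h y))

theorem relP {P : Setoid α} {x y : α} (h : Quotient.mk P x = Quotient.mk P y) : P x y :=
  Quotient.exact h

theorem mkP {P : Setoid α} {x y : α} (h : P x y) : Quotient.mk P x = Quotient.mk P y :=
  Quotient.sound h

theorem mk_out {P : Setoid α} (i : Quotient P) : Quotient.mk P i.out = i := Quotient.out_eq i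

/-- The infinite-quotient case. -/
theorem case_infinite (P : Setoid α) (hi : Infinite (Quotient P))
    (a b : α) (hab : a ≠ b) (hPab : P a b) :
    2 ^ Cardinal.mk (Quotient P) ≤ Cardinal.mk (complements P) := by
  classical
  set i0 : Quotient P := Quotient.mk P a with hi0
  have hb0 : Quotient.mk P b = i0 := (mkP hPab).symm
  set o : {i : Quotient P // i ≠ i0} → α := fun i => (i : Quotient P).out with ho
  have hcls : ∀ i : {i : Quotient P // i ≠ i0}, Quotient.mk P (o i) = (i : Quotient P) :=
    fun i => mk_out _
  have hoa : ∀ i : {i : Quotient P // i ≠ i0}, o i ≠ a := by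
    intro i h
    exact i.2 (by rw [← hcls i, h])
  have hob : ∀ i : {i : Quotient P // i ≠ i0}, o i ≠ b := by
    intro i h
    exact i.2 (by rw [← hcls i, h, hb0])
  have hoinj : Function.Injective o := by
    intro i j h
    apply Subtype.ext
    rw [← hcls i, ← hcls j, h]
  set T1 : Set {i : Quotient P // i ≠ i0} → Set α := fun S => insert a (o '' S) with hT1
  set T2 : Set {i : Quotient P // i ≠ i0} → Set α := fun S => insert b (o '' Sᶜ) with hT2
  set Q : Set {i : Quotient P // i ≠ i0} → Setoid α :=
    fun S => Setoid.ker (trv (T1 S) (T2 S) a b) with hQ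
  -- block transversal property for T1
  have htr1 : ∀ S, ∀ x ∈ T1 S, ∀ y ∈ T1 S, P x y → x = y := by
    intro S x hx y hy hxy
    have hcxy := mkP hxy
    rcases hx with hx | ⟨i, hiS, rfl⟩ <;> rcases hy with hy | ⟨j, hjS, rfl⟩
    · rw [hx, hy]
    · exfalso; apply j.2; rw [← hcls j, ← hcxy, hx]
    · exfalso; apply i.2; rw [← hcls i, hcxy, hy]
    · have h' : (i : Quotient P) = (j : Quotient P) := by rw [← hcls i, ← hcls j, hcxy]
      exact congrArg o (Subtype.ext h')
  have htr2 : ∀ S, ∀ x ∈ T2 S, ∀ y ∈ T2 S, P x y → x = y := by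
    intro S x hx y hy hxy
    have hcxy := mkP hxy
    rcases hx with hx | ⟨i, hiS, rfl⟩ <;> rcases hy with hy | ⟨j, hjS, rfl⟩
    · rw [hx, hy]
    · exfalso; apply j.2; rw [← hcls j, ← hcxy, hx]; exact hb0
    · exfalso; apply i.2; rw [← hcls i, hcxy, hy]; exact hb0
    · have h' : (i : Quotient P) = (j : Quotient P) := by rw [← hcls i, ← hcls j, hcxy]
      exact congrArg o (Subtype.ext h')
  have hdis : ∀ S, ∀ x, x ∈ T1 S → x ∉ T2 S := by
    intro S x hx hx2
    rcases hx with hx | ⟨i, hiS, rfl⟩ <;> rcases hx2 with hx2 | ⟨j, hjS, hj⟩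
    · exact hab (hx.symm.trans hx2)
    · exact hoa j (hj.trans hx)
    · exact hob i hx2
    · exact hjS (by rw [hoinj hj]; exact hiS)
  -- trv values
  have haT1 : ∀ S, a ∈ T1 S := fun S => Set.mem_insert _ _
  have hbT2 : ∀ S, b ∈ T2 S := fun S => Set.mem_insert _ _
  have htva : ∀ S, trv (T1 S) (T2 S) a b a = a := by
    intro S; simp [trv, haT1 S]
  have htvb : ∀ S, trv (T1 S) (T2 S) a b b = b := by
    intro S
    have : b ∉ T1 S := fun h => hdis S b h (hbT2 S)
    simp [trv, this, hbT2 S]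
  have htvo : ∀ S (i : {i : Quotient P // i ≠ i0}), i ∈ S →
      trv (T1 S) (T2 S) a b (o i) = a := by
    intro S i hiS
    have : o i ∈ T1 S := Set.mem_insert_of_mem _ ⟨i, hiS, rfl⟩
    simp [trv, this]
  have htvo' : ∀ S (i : {i : Quotient P // i ≠ i0}), i ∉ S →
      trv (T1 S) (T2 S) a b (o i) = b := by
    intro S i hiS
    have h2 : o i ∈ T2 S := Set.mem_insert_of_mem _ ⟨i, hiS, rfl⟩
    have h1 : o i ∉ T1 S := fun h => hdis S _ h h2
    simp [trv, h1, h2]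
  -- complements
  have hcomp : ∀ S, Q S ∈ complements P := by
    intro S
    constructor
    · exact meet_bot P _ _ _ _ (htr1 S) (htr2 S) (hdis S) (haT1 S)
        (fun _ _ => hbT2 S) (fun _ _ => hab)
    · apply sup_top P (Q S) a
      intro x
      set R := P ⊔ Q S with hR
      have hPR : ∀ {u v}, P u v → R u v := fun h => Setoid.le_def.1 le_sup_left h
      have hQR : ∀ {u v}, Q S u v → R u v := fun h => Setoid.le_def.1 le_sup_right h
      by_cases hx0 : Quotient.mk P x = i0
      · exact hPR (relP hx0)
      · set i : {i : Quotient P // i ≠ i0} := ⟨Quotient.mk P x, hx0⟩ with hii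
        have hxo : P x (o i) := relP (by rw [hcls i])
        by_cases hS : i ∈ S
        · have : Q S (o i) a := show trv _ _ _ _ _ = trv _ _ _ _ _ by
            rw [htvo S i hS, htva S]
          exact R.trans (hPR hxo) (hQR this)
        · have h1 : Q S (o i) b := show trv _ _ _ _ _ = trv _ _ _ _ _ by
            rw [htvo' S i hS, htvb S]
          exact R.trans (hPR hxo) (R.trans (hQR h1) (hPR (P.symm hPab)))
  -- injectivity
  have hkey : ∀ S (i : {i : Quotient P // i ≠ i0}), i ∈ S ↔ Q S (o i) a := by
    intro S i
    constructor
    · intro hiS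
      show trv _ _ _ _ _ = trv _ _ _ _ _
      rw [htvo S i hiS, htva S]
    · intro h
      by_contra hiS
      have h' : trv (T1 S) (T2 S) a b (o i) = trv (T1 S) (T2 S) a b a := h
      rw [htvo' S i hiS, htva S] at h'
      exact hab h'.symm
  have hinj : Function.Injective (fun S : Set {i : Quotient P // i ≠ i0} =>
      (⟨Q S, hcomp S⟩ : ↥(complements P))) := by
    intro S S' h
    have hQQ : Q S = Q S' := congrArg Subtype.val h
    ext i
    rw [hkey S i, hkey S' i, hQQ]
  -- cardinal computation
  have hcard : Cardinal.mk {i : Quotient P // i ≠ i0} = Cardinal.mk (Quotient P) := by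
    have h1 : Cardinal.mk ↥({i0}ᶜ : Set (Quotient P)) = Cardinal.mk (Quotient P) := by
      apply Cardinal.mk_compl_of_infinite
      rw [Cardinal.mk_singleton]
      exact Cardinal.one_lt_aleph0.trans_le (Cardinal.aleph0_le_mk _)
    rw [← h1]
    exact Cardinal.mk_congr (Equiv.subtypeEquivRight (by simp))
  calc 2 ^ Cardinal.mk (Quotient P)
      = 2 ^ Cardinal.mk {i : Quotient P // i ≠ i0} := by rw [hcard]
    _ = Cardinal.mk (Set {i : Quotient P // i ≠ i0}) := Cardinal.mk_set.symm
    _ ≤ Cardinal.mk (complements P) := Cardinal.mk_le_of_injective hinj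

/-- The finite-quotient case: there are infinitely many complements. -/
theorem case_finite (P : Setoid α) (hf : Finite (Quotient P)) (hinf : Infinite α)
    (htop : P ≠ ⊤) : Cardinal.aleph0 ≤ Cardinal.mk (complements P) := by
  classical
  obtain ⟨i1, hfib⟩ := Finite.exists_infinite_fiber (Quotient.mk P)
  obtain ⟨i2, hi2⟩ : ∃ i : Quotient P, i ≠ i1 := by
    obtain ⟨x1, y1, hnP⟩ : ∃ x y, ¬ P x y := by
      by_contra h; push_neg at h; exact htop (Setoid.eq_top_iff.2 h)
    by_cases h : Quotient.mk P x1 = i1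
    · exact ⟨Quotient.mk P y1, fun hh => hnP (relP (h.trans hh.symm))⟩
    · exact ⟨Quotient.mk P x1, h⟩
  set o : Quotient P → α := fun i => i.out with ho
  have hcls : ∀ i, Quotient.mk P (o i) = i := fun i => mk_out i
  set T : α → Set α := fun y => insert y (o '' {i | i ≠ i1}) with hT
  set Q : α → Setoid α := fun y => Setoid.ker (trv (T y) ∅ y y) with hQ
  have htr : ∀ y ∈ Quotient.mk P ⁻¹' {i1}, ∀ x ∈ T y, ∀ z ∈ T y, P x z → x = z := by
    intro y hy x hx z hz hxz
    have hy1 : Quotient.mk P y = i1 := hy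
    have hcxz := mkP hxz
    rcases hx with hx | ⟨i, hiS, rfl⟩ <;> rcases hz with hz | ⟨j, hjS, rfl⟩
    · rw [hx, hz]
    · exfalso; apply hjS; rw [← hcls j, ← hcxz, hx]; exact hy1
    · exfalso; apply hiS; rw [← hcls i, hcxz, hz]; exact hy1
    · have h' : i = j := by rw [← hcls i, ← hcls j, hcxz]
      exact congrArg o h'
  have hoy : ∀ y ∈ Quotient.mk P ⁻¹' {i1}, ∀ i : Quotient P, i ≠ i1 → o i ≠ y := by
    intro y hy i hi h
    have hy1 : Quotient.mk P y = i1 := hy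
    exact hi (by rw [← hcls i, h, hy1])
  have htvy : ∀ y, trv (T y) ∅ y y y = y := by
    intro y; simp [trv, hT]
  have htvo : ∀ y (i : Quotient P), i ≠ i1 → trv (T y) ∅ y y (o i) = y := by
    intro y i hi
    have : o i ∈ T y := Set.mem_insert_of_mem _ ⟨i, hi, rfl⟩
    simp [trv, this]
  have hcomp : ∀ y ∈ Quotient.mk P ⁻¹' {i1}, Q y ∈ complements P := by
    intro y hy
    constructor
    · exact meet_bot P _ _ _ _ (htr y hy) (by simp) (by simp) (Set.mem_insert _ _)
        (by simp) (by simp)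
    · apply sup_top P (Q y) y
      intro x
      set R := P ⊔ Q y with hR
      have hPR : ∀ {u v}, P u v → R u v := fun h => Setoid.le_def.1 le_sup_left h
      have hQR : ∀ {u v}, Q y u v → R u v := fun h => Setoid.le_def.1 le_sup_right h
      by_cases hx0 : Quotient.mk P x = i1
      · exact hPR (relP (hx0.trans hy.symm))
      · have hxo : P x (o (Quotient.mk P x)) := relP (by rw [hcls])
        have : Q y (o (Quotient.mk P x)) y := show trv _ _ _ _ _ = trv _ _ _ _ _ by
          rw [htvo y _ hx0, htvy]
        exact R.trans (hPR hxo) (hQR this)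
  have hinj : Function.Injective (fun y : ↥(Quotient.mk P ⁻¹' {i1}) =>
      (⟨Q y, hcomp y y.2⟩ : ↥(complements P))) := by
    intro y y' h
    have hQQ : Q (y : α) = Q (y' : α) := congrArg Subtype.val h
    have h1 : Q (y : α) (o i2) (y : α) := show trv _ _ _ _ _ = trv _ _ _ _ _ by
      rw [htvo _ i2 hi2, htvy]
    rw [hQQ] at h1
    have h1' : trv (T (y' : α)) ∅ (y' : α) (y' : α) (o i2) =
        trv (T (y' : α)) ∅ (y' : α) (y' : α) (y : α) := h1
    rw [htvo _ i2 hi2] at h1'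
    apply Subtype.ext
    by_cases hmem : (y : α) ∈ T (y' : α)
    · rcases hmem with hm | ⟨j, hj, hjo⟩
      · exact hm
      · exact absurd hjo (hoy (y : α) y.2 j hj)
    · have : trv (T (y' : α)) ∅ (y' : α) (y' : α) (y : α) = (y : α) := by
        simp [trv, hmem]
      rw [this] at h1'
      exact h1'.symm
  have h1 : Cardinal.aleph0 ≤ Cardinal.mk ↥(Quotient.mk P ⁻¹' {i1}) :=
    Cardinal.aleph0_le_mk _
  exact h1.trans (Cardinal.mk_le_of_injective hinj)

end Stmt13Aux

/-- For an infinite cardinal κ and a non-trivial partition `P` of κ, the number of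
complements of `P` is at least `2^|P|`, where `|P|` is the number of blocks. -/
theorem stmt_13 {α : Type u} (hα : Cardinal.aleph0 ≤ Cardinal.mk α)
    (P : Setoid α) (hbot : P ≠ ⊥) (htop : P ≠ ⊤) :
    2 ^ Cardinal.mk (Quotient P) ≤ Cardinal.mk (complements P) := by
  rcases finite_or_infinite (Quotient P) with hf | hi
  · have h2 : (2 : Cardinal) ^ Cardinal.mk (Quotient P) < Cardinal.aleph0 :=
      Cardinal.power_lt_aleph0 (Cardinal.nat_lt_aleph0 2) (Cardinal.lt_aleph0_of_finite _)
    have hinf : Infinite α := Cardinal.infinite_iff.2 hα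
    exact h2.le.trans (Stmt13Aux.case_finite P hf hinf htop)
  · obtain ⟨a, b, hPab, hab⟩ : ∃ x y, P x y ∧ x ≠ y := by
      by_contra h
      push_neg at h
      apply hbot
      apply le_antisymm _ bot_le
      rw [Setoid.le_def]
      intro x y hxy
      have : x = y := h x y hxy
      subst this
      exact (⊥ : Setoid α).refl x
    exact Stmt13Aux.case_infinite P hi a b hab hPab
end

section
/- Let κ be an infinite cardinal and P ∉ {⊥, ⊤} a partition of κ in which no block has cardinality κ. Then P has exactly 2^κ complements in the partition lattice of κ. -/
universe u

namespace Stmt14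

variable {α : Type u}

noncomputable def rep (P : Setoid α) (x : α) : α := (Quotient.mk P x).out

lemma rep_rel (P : Setoid α) (x : α) : P x (rep P x) :=
  Setoid.symm' P (Quotient.exact (Quotient.out_eq _))

lemma rep_congr (P : Setoid α) {x y : α} (h : P x y) : rep P x = rep P y :=
  congrArg Quotient.out (Quotient.sound h)

lemma rep_idem (P : Setoid α) (x : α) : rep P (rep P x) = rep P x :=
  (rep_congr P (rep_rel P x)).symm

lemma mem_complements' {P Q : Setoid α}
    (hmeet : ∀ x y, P x y → Q x y → x = y)
    (hjoin : ∀ x y, (P ⊔ Q) x y) : Q ∈ complements P := by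
  constructor
  · refine le_antisymm ?_ bot_le
    rw [Setoid.le_def]
    intro x y h
    have hxy : x = y := hmeet x y h.1 h.2
    subst hxy
    exact Setoid.refl' _ x
  · refine le_antisymm le_top ?_
    rw [Setoid.le_def]
    intro x y _
    exact hjoin x y

lemma exists_ne_rel {P : Setoid α} (hbot : P ≠ ⊥) : ∃ x y, P x y ∧ x ≠ y := by
  by_contra hno
  push_neg at hno
  apply hbot
  refine le_antisymm ?_ bot_le
  rw [Setoid.le_def]
  intro x y hxy
  have := hno x y hxy
  subst this
  exact Setoid.refl' _ x

/-! ### Case 1 construction : two big blocks -/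

def qarel (t : α → α) (b : α) (S : Set α) (x y : α) : Prop :=
  x = y ∨ ((t x = x ∧ x ∉ S) ∧ (t y = y ∧ y ∉ S)) ∨ ((x ∈ S ∨ x = b) ∧ (y ∈ S ∨ y = b))

lemma qa_notboth {t : α → α} {b : α} {S : Set α} (hb : t b ≠ b) {y : α}
    (h1 : t y = y ∧ y ∉ S) (h2 : y ∈ S ∨ y = b) : False := by
  rcases h2 with h2 | rfl
  · exact h1.2 h2
  · exact hb h1.1

def QA (t : α → α) (b : α) (S : Set α) (hb : t b ≠ b) : Setoid α where
  r := qarel t b S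
  iseqv := by
    constructor
    · intro x; exact Or.inl rfl
    · intro x y h
      rcases h with rfl | ⟨hx, hy⟩ | ⟨hx, hy⟩
      · exact Or.inl rfl
      · exact Or.inr (Or.inl ⟨hy, hx⟩)
      · exact Or.inr (Or.inr ⟨hy, hx⟩)
    · intro x y z hxy hyz
      rcases hxy with rfl | ⟨hx, hy⟩ | ⟨hx, hy⟩
      · exact hyz
      · rcases hyz with rfl | ⟨hy', hz⟩ | ⟨hy', hz⟩
        · exact Or.inr (Or.inl ⟨hx, hy⟩)
        · exact Or.inr (Or.inl ⟨hx, hz⟩)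
        · exact (qa_notboth hb hy hy').elim
      · rcases hyz with rfl | ⟨hy', hz⟩ | ⟨hy', hz⟩
        · exact Or.inr (Or.inr ⟨hx, hy⟩)
        · exact (qa_notboth hb hy' hy).elim
        · exact Or.inr (Or.inr ⟨hx, hz⟩)

lemma QA_mem (P : Setoid α) (hrel : ∀ x, P x (rep P x))
    (hcong : ∀ x y, P x y → rep P x = rep P y)
    (a b : α) (ha : rep P a = a) (hab : P a b) (hb : rep P b ≠ b)
    (S : Set α) (hST : ∀ x ∈ S, rep P x = x) (hSa : a ∉ S) :
    QA (rep P) b S hb ∈ complements P := by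
  apply mem_complements'
  · intro x y hP hQ
    rcases hQ with rfl | ⟨⟨hx1, _⟩, ⟨hy1, _⟩⟩ | ⟨hx, hy⟩
    · rfl
    · calc x = rep P x := hx1.symm
        _ = rep P y := hcong x y hP
        _ = y := hy1
    · rcases hx with hxS | rfl <;> rcases hy with hyS | rfl
      · exact ((hST x hxS).symm.trans ((hcong x y hP).trans (hST y hyS)))
      · exfalso
        have hxa : P x a := P.trans' hP (P.symm' hab)
        have h2 : rep P x = rep P a := hcong _ _ hxa
        rw [hST x hxS, ha] at h2
        exact hSa (h2 ▸ hxS)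
      · exfalso
        have hya : P y a := P.trans' (P.symm' hP) (P.symm' hab)
        have h2 : rep P y = rep P a := hcong _ _ hya
        rw [hST y hyS, ha] at h2
        exact hSa (h2 ▸ hyS)
      · rfl
  · intro x y
    set Q := QA (rep P) b S hb with hQdef
    have l1 : P ≤ P ⊔ Q := le_sup_left
    have l2 : Q ≤ P ⊔ Q := le_sup_right
    have key : ∀ z : α, (P ⊔ Q) z a := by
      intro z
      have h1 : (P ⊔ Q) z (rep P z) := Setoid.le_def.mp l1 (hrel z)
      have htz : rep P (rep P z) = rep P z := rep_idem P z
      by_cases hzS : rep P z ∈ S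
      · have hQ1 : Q (rep P z) b := Or.inr (Or.inr ⟨Or.inl hzS, Or.inr rfl⟩)
        have h2 : (P ⊔ Q) (rep P z) b := Setoid.le_def.mp l2 hQ1
        have h3 : (P ⊔ Q) b a := Setoid.le_def.mp l1 (P.symm' hab)
        exact Setoid.trans' _ h1 (Setoid.trans' _ h2 h3)
      · have hQ1 : Q (rep P z) a := Or.inr (Or.inl ⟨⟨htz, hzS⟩, ⟨ha, hSa⟩⟩)
        exact Setoid.trans' _ h1 (Setoid.le_def.mp l2 hQ1)
    exact Setoid.trans' _ (key x) (Setoid.symm' _ (key y))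

lemma QA_sub (t : α → α) (b : α) (hb : t b ≠ b) {S1 S2 : Set α}
    (h1 : ∀ x ∈ S1, t x = x)
    (h : QA t b S1 hb = QA t b S2 hb) : S1 ⊆ S2 := by
  intro x hx
  have hQ1 : QA t b S1 hb x b := Or.inr (Or.inr ⟨Or.inl hx, Or.inr rfl⟩)
  rw [h] at hQ1
  rcases hQ1 with rfl | ⟨⟨_, _⟩, ⟨hb1, _⟩⟩ | ⟨hxB, _⟩
  · exact absurd (h1 x hx) hb
  · exact absurd hb1 hb
  · rcases hxB with hxS2 | rfl
    · exact hxS2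
    · exact absurd (h1 x hx) hb

/-! ### Case 2 construction : transversal plus pairs -/

def qbrel (t : α → α) (N : Set (α × α)) (x y : α) : Prop :=
  x = y ∨ (t x = x ∧ t y = y) ∨ (x, y) ∈ N ∨ (y, x) ∈ N

def QB (t : α → α) (N : Set (α × α))
    (h1 : ∀ p ∈ N, t p.1 ≠ p.1 ∧ t p.2 ≠ p.2 ∧ p.1 ≠ p.2)
    (h2 : ∀ p ∈ N, ∀ q ∈ N, p ≠ q → p.1 ≠ q.1 ∧ p.1 ≠ q.2 ∧ p.2 ≠ q.1 ∧ p.2 ≠ q.2) :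
    Setoid α where
  r := qbrel t N
  iseqv := by
    constructor
    · intro x; exact Or.inl rfl
    · intro x y h
      rcases h with rfl | ⟨hx, hy⟩ | hp | hp
      · exact Or.inl rfl
      · exact Or.inr (Or.inl ⟨hy, hx⟩)
      · exact Or.inr (Or.inr (Or.inr hp))
      · exact Or.inr (Or.inr (Or.inl hp))
    · intro x y z hxy hyz
      rcases hxy with rfl | ⟨hx, hy⟩ | hp | hp
      · exact hyz
      · rcases hyz with rfl | ⟨hy', hz⟩ | hq | hq
        · exact Or.inr (Or.inl ⟨hx, hy⟩)
        · exact Or.inr (Or.inl ⟨hx, hz⟩)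
        · exact absurd hy (h1 _ hq).1
        · exact absurd hy (h1 _ hq).2.1
      · rcases hyz with rfl | ⟨hy', hz⟩ | hq | hq
        · exact Or.inr (Or.inr (Or.inl hp))
        · exact absurd hy' (h1 _ hp).2.1
        · by_cases he : ((x, y) : α × α) = (y, z)
          · have e1 : x = y := (Prod.ext_iff.mp he).1
            have e2 : y = z := (Prod.ext_iff.mp he).2
            exact Or.inl (e1.trans e2)
          · exact absurd rfl (h2 _ hp _ hq he).2.2.1
        · by_cases he : ((x, y) : α × α) = (z, y)
          · exact Or.inl (Prod.ext_iff.mp he).1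
          · exact absurd rfl (h2 _ hp _ hq he).2.2.2
      · rcases hyz with rfl | ⟨hy', hz⟩ | hq | hq
        · exact Or.inr (Or.inr (Or.inr hp))
        · exact absurd hy' (h1 _ hp).1
        · by_cases he : ((y, x) : α × α) = (y, z)
          · exact Or.inl (Prod.ext_iff.mp he).2
          · exact absurd rfl (h2 _ hp _ hq he).1
        · by_cases he : ((y, x) : α × α) = (z, y)
          · have e1 : y = z := (Prod.ext_iff.mp he).1
            have e2 : x = y := (Prod.ext_iff.mp he).2
            exact Or.inl (e2.trans e1)
          · exact absurd rfl (h2 _ hp _ hq he).2.1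

lemma QB_mem (P : Setoid α) (hrel : ∀ x, P x (rep P x))
    (hcong : ∀ x y, P x y → rep P x = rep P y)
    (N : Set (α × α))
    (h1 : ∀ p ∈ N, rep P p.1 ≠ p.1 ∧ rep P p.2 ≠ p.2 ∧ p.1 ≠ p.2)
    (h2 : ∀ p ∈ N, ∀ q ∈ N, p ≠ q → p.1 ≠ q.1 ∧ p.1 ≠ q.2 ∧ p.2 ≠ q.1 ∧ p.2 ≠ q.2)
    (hNP : ∀ p ∈ N, ¬ P p.1 p.2) :
    QB (rep P) N h1 h2 ∈ complements P := by
  apply mem_complements'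
  · intro x y hP hQ
    rcases hQ with rfl | ⟨hx, hy⟩ | hp | hp
    · rfl
    · calc x = rep P x := hx.symm
        _ = rep P y := hcong x y hP
        _ = y := hy
    · exact absurd hP (hNP _ hp)
    · exact absurd (P.symm' hP) (hNP _ hp)
  · intro x y
    set Q := QB (rep P) N h1 h2 with hQdef
    have l1 : P ≤ P ⊔ Q := le_sup_left
    have l2 : Q ≤ P ⊔ Q := le_sup_right
    have hQmid : Q (rep P x) (rep P y) := Or.inr (Or.inl ⟨rep_idem P x, rep_idem P y⟩)
    exact Setoid.trans' _ (Setoid.le_def.mp l1 (hrel x))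
      (Setoid.trans' _ (Setoid.le_def.mp l2 hQmid)
        (Setoid.symm' _ (Setoid.le_def.mp l1 (hrel y))))

lemma QB_sub (t : α → α) {N1 N2 : Set (α × α)} {h1 h2 h1' h2'}
    (hcross : ∀ p ∈ N1, ∀ q ∈ N2, p ≠ q → p.1 ≠ q.1 ∧ p.1 ≠ q.2 ∧ p.2 ≠ q.1 ∧ p.2 ≠ q.2)
    (h : QB t N1 h1 h2 = QB t N2 h1' h2') : N1 ⊆ N2 := by
  rintro ⟨x, y⟩ hp
  have hQ1 : QB t N1 h1 h2 x y := Or.inr (Or.inr (Or.inl hp))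
  rw [h] at hQ1
  rcases hQ1 with heq | ⟨hx, _⟩ | hq | hq
  · exact absurd heq (h1 _ hp).2.2
  · exact absurd hx (h1 _ hp).1
  · exact hq
  · exfalso
    have hne : ((x, y) : α × α) ≠ (y, x) := by
      intro he
      exact (h1 _ hp).2.2 (Prod.ext_iff.mp he).1
    exact (hcross _ hp _ hq hne).2.1 rfl

/-! ### cardinal helpers -/

lemma card_piece (κ : Cardinal.{u}) (hκ : Cardinal.aleph0 ≤ κ) {a b : Cardinal.{u}}
    (hab : κ ≤ a + b) (ha : a < κ) (hb : b ≤ κ) : b = κ := by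
  by_contra hne
  have : a + b < κ := Cardinal.add_lt_of_lt hκ ha (lt_of_le_of_ne hb hne)
  exact absurd (hab.trans_lt this) (lt_irrefl κ)

end Stmt14

open Stmt14 in
/-- If `P` is a non-trivial partition of an infinite cardinal κ in which no block has
cardinality κ, then `P` has exactly `2^κ` complements. -/
theorem stmt_14 {α : Type u} (hα : Cardinal.aleph0 ≤ Cardinal.mk α)
    (P : Setoid α) (hbot : P ≠ ⊥) (htop : P ≠ ⊤)
    (hblocks : ∀ a : α, Cardinal.mk {b : α | P a b} < Cardinal.mk α) :
    Cardinal.mk (complements P) = 2 ^ Cardinal.mk α := by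
  have hcong : ∀ x y : α, P x y → rep P x = rep P y := fun x y h => rep_congr P h
  have hrel : ∀ x, P x (rep P x) := rep_rel P
  -- upper bound
  have hprod : Cardinal.mk (α × α) = Cardinal.mk α := by
    rw [Cardinal.mk_prod]
    simp only [Cardinal.lift_id]
    exact Cardinal.mul_eq_self hα
  have hupper : Cardinal.mk (complements P) ≤ 2 ^ Cardinal.mk α := by
    have hinj : Function.Injective
        (fun Q : complements P => {p : α × α | Q.val p.1 p.2}) := by
      intro Q1 Q2 h
      apply Subtype.ext
      apply Setoid.ext
      intro a b
      have := Set.ext_iff.mp h (a, b)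
      exact this
    calc Cardinal.mk (complements P) ≤ Cardinal.mk (Set (α × α)) :=
          Cardinal.mk_le_of_injective hinj
      _ = 2 ^ Cardinal.mk (α × α) := Cardinal.mk_set
      _ = 2 ^ Cardinal.mk α := by rw [hprod]
  -- lower bound
  -- transversal
  set T : Set α := {x | rep P x = x} with hTdef
  obtain ⟨x0, y0, hxy0, hne0⟩ := exists_ne_rel hbot
  set a : α := rep P x0 with hadef
  have ha : rep P a = a := rep_idem P x0
  have hax0 : P a x0 := P.symm' (hrel x0)
  obtain ⟨b, hab, hba⟩ : ∃ b, P a b ∧ b ≠ a := by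
    by_cases h : x0 = a
    · exact ⟨y0, h ▸ hxy0, fun hy => hne0 (h.trans hy.symm ▸ rfl)⟩
    · exact ⟨x0, hax0, h⟩
  have hb : rep P b ≠ b := by
    intro hbb
    have : rep P a = rep P b := hcong _ _ hab
    rw [ha, hbb] at this
    exact hba this.symm
  have hlower : 2 ^ Cardinal.mk α ≤ Cardinal.mk (complements P) := by
    have hcases : Cardinal.mk T = Cardinal.mk α ∨ Cardinal.mk (Tᶜ : Set α) = Cardinal.mk α := by
      by_contra hc
      push_neg at hc
      have h1 : Cardinal.mk T < Cardinal.mk α :=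
        lt_of_le_of_ne (Cardinal.mk_set_le T) hc.1
      have h2 : Cardinal.mk (Tᶜ : Set α) < Cardinal.mk α :=
        lt_of_le_of_ne (Cardinal.mk_set_le _) hc.2
      have := Cardinal.add_lt_of_lt hα h1 h2
      rw [Cardinal.mk_sum_compl] at this
      exact absurd this (lt_irrefl _)
    rcases hcases with hT | hR
    · -- Case 1: many blocks
      set W : Set α := T \ {a} with hWdef
      have haT : a ∈ T := ha
      have hWcard : Cardinal.mk W = Cardinal.mk α := by
        have e1 : Cardinal.mk W + Cardinal.mk ({a} : Set α) = Cardinal.mk T :=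
          Cardinal.mk_diff_add_mk (Set.singleton_subset_iff.mpr haT)
        rw [Cardinal.mk_singleton] at e1
        have hWinf : Cardinal.aleph0 ≤ Cardinal.mk W := by
          by_contra h'
          push_neg at h'
          have : Cardinal.mk W + 1 < Cardinal.aleph0 :=
            Cardinal.add_lt_aleph0 h' Cardinal.one_lt_aleph0
          rw [e1, hT] at this
          exact absurd this (not_lt_of_ge hα)
        calc Cardinal.mk W = Cardinal.mk W + 1 := (Cardinal.add_one_eq hWinf).symm
          _ = Cardinal.mk T := e1
          _ = Cardinal.mk α := hT
      set f : Set W → complements P := fun i =>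
        ⟨QA (rep P) b (Subtype.val '' i) hb, by
          apply QA_mem P hrel hcong a b ha hab hb
          · rintro x ⟨⟨x', hx'⟩, _, rfl⟩
            exact hx'.1
          · rintro ⟨⟨x', hx'⟩, _, rfl⟩
            exact hx'.2 rfl⟩ with hfdef
      have hfinj : Function.Injective f := by
        intro i1 i2 h
        have hQ : QA (rep P) b (Subtype.val '' i1) hb = QA (rep P) b (Subtype.val '' i2) hb :=
          congrArg Subtype.val h
        have hmem : ∀ (i : Set W), ∀ x ∈ Subtype.val '' i, rep P x = x := by
          rintro i x ⟨⟨x', hx'⟩, _, rfl⟩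
          exact hx'.1
        have hss : Subtype.val '' i1 = Subtype.val '' i2 :=
          le_antisymm (QA_sub _ _ _ (hmem i1) hQ) (QA_sub _ _ _ (hmem i2) hQ.symm)
        exact Set.image_injective.mpr Subtype.val_injective hss
      calc (2 : Cardinal) ^ Cardinal.mk α = 2 ^ Cardinal.mk W := by rw [hWcard]
        _ = Cardinal.mk (Set W) := Cardinal.mk_set.symm
        _ ≤ Cardinal.mk (complements P) := Cardinal.mk_le_of_injective hfinj
    · -- Case 2: big remainder
      set SS : Set (Set (α × α)) :=
        {M | (∀ p ∈ M, rep P p.1 ≠ p.1 ∧ rep P p.2 ≠ p.2 ∧ ¬ P p.1 p.2) ∧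
          (∀ p ∈ M, ∀ q ∈ M, p ≠ q →
            p.1 ≠ q.1 ∧ p.1 ≠ q.2 ∧ p.2 ≠ q.1 ∧ p.2 ≠ q.2)} with hSSdef
      obtain ⟨M, hM⟩ : ∃ M, Maximal (· ∈ SS) M := by
        apply zorn_subset
        intro c hcS hchain
        refine ⟨⋃₀ c, ⟨?_, ?_⟩, fun s hs => Set.subset_sUnion_of_mem hs⟩
        · rintro p ⟨m, hm, hpm⟩
          exact (hcS hm).1 p hpm
        · rintro p ⟨m, hm, hpm⟩ q ⟨m', hm', hqm⟩ hne
          rcases hchain.total hm hm' with hsub | hsub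
          · exact (hcS hm').2 p (hsub hpm) q hqm hne
          · exact (hcS hm).2 p hpm q (hsub hqm) hne
      have hMS : M ∈ SS := hM.1
      set Msupp : Set α := Prod.fst '' M ∪ Prod.snd '' M with hsuppdef
      have hleft : ∀ x y : α, x ∈ (Tᶜ : Set α) → y ∈ (Tᶜ : Set α) →
          x ∉ Msupp → y ∉ Msupp → x ≠ y → P x y := by
        intro x y hxR hyR hxs hys hxy
        by_contra hP'
        have hins : insert ((x, y) : α × α) M ∈ SS := by
          constructor
          · rintro p (rfl | hpM)
            · exact ⟨hxR, hyR, hP'⟩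
            · exact hMS.1 p hpM
          · rintro p (rfl | hpM) q (rfl | hqM) hne
            · exact absurd rfl hne
            · refine ⟨?_, ?_, ?_, ?_⟩ <;> intro he
              · exact hxs (Or.inl ⟨q, hqM, he.symm⟩)
              · exact hxs (Or.inr ⟨q, hqM, he.symm⟩)
              · exact hys (Or.inl ⟨q, hqM, he.symm⟩)
              · exact hys (Or.inr ⟨q, hqM, he.symm⟩)
            · refine ⟨?_, ?_, ?_, ?_⟩ <;> intro he
              · exact hxs (Or.inl ⟨p, hpM, he⟩)
              · exact hys (Or.inl ⟨p, hpM, he⟩)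
              · exact hxs (Or.inr ⟨p, hpM, he⟩)
              · exact hys (Or.inr ⟨p, hpM, he⟩)
            · exact hMS.2 p hpM q hqM hne
        have : insert ((x, y) : α × α) M ⊆ M := hM.2 hins (Set.subset_insert _ _)
        have hmem : ((x, y) : α × α) ∈ M := this (Set.mem_insert _ _)
        exact hxs (Or.inl ⟨(x, y), hmem, rfl⟩)
      -- cardinality of M
      have hMcard : Cardinal.mk M = Cardinal.mk α := by
        have hMle : Cardinal.mk M ≤ Cardinal.mk α := by
          calc Cardinal.mk M ≤ Cardinal.mk (α × α) := Cardinal.mk_set_le M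
            _ = Cardinal.mk α := hprod
        by_contra hne
        have hMlt : Cardinal.mk M < Cardinal.mk α := lt_of_le_of_ne hMle hne
        set L : Set α := (Tᶜ : Set α) \ Msupp with hLdef
        have hLlt : Cardinal.mk L < Cardinal.mk α := by
          rcases L.eq_empty_or_nonempty with hE | ⟨z0, hz0⟩
          · rw [hE]
            simpa using lt_of_lt_of_le (Cardinal.aleph0_pos) hα
          · have hsub : L ⊆ {w : α | P z0 w} := by
              intro w hw
              by_cases hzw : w = z0
              · exact hzw ▸ Setoid.refl' P z0
              · exact hleft z0 w hz0.1 hw.1 hz0.2 hw.2 (fun h => hzw h.symm)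
            exact lt_of_le_of_lt (Cardinal.mk_le_mk_of_subset hsub) (hblocks z0)
        have hsupplt : Cardinal.mk Msupp < Cardinal.mk α := by
          have h1 : Cardinal.mk Msupp ≤ Cardinal.mk (Prod.fst '' M : Set α)
              + Cardinal.mk (Prod.snd '' M : Set α) := Cardinal.mk_union_le _ _
          have h2 : Cardinal.mk (Prod.fst '' M : Set α) ≤ Cardinal.mk M :=
            Cardinal.mk_image_le
          have h3 : Cardinal.mk (Prod.snd '' M : Set α) ≤ Cardinal.mk M :=
            Cardinal.mk_image_le
          calc Cardinal.mk Msupp ≤ _ := h1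
            _ < Cardinal.mk α := Cardinal.add_lt_of_lt hα
                (lt_of_le_of_lt h2 hMlt) (lt_of_le_of_lt h3 hMlt)
        have hcover : (Tᶜ : Set α) ⊆ L ∪ Msupp := by
          intro x hx
          by_cases h : x ∈ Msupp
          · exact Or.inr h
          · exact Or.inl ⟨hx, h⟩
        have : Cardinal.mk (Tᶜ : Set α) < Cardinal.mk α := by
          calc Cardinal.mk (Tᶜ : Set α) ≤ Cardinal.mk (L ∪ Msupp : Set α) :=
                Cardinal.mk_le_mk_of_subset hcover
            _ ≤ Cardinal.mk L + Cardinal.mk Msupp := Cardinal.mk_union_le _ _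
            _ < Cardinal.mk α := Cardinal.add_lt_of_lt hα hLlt hsupplt
        rw [hR] at this
        exact absurd this (lt_irrefl _)
      -- the injection
      have hMpair : ∀ p ∈ M, rep P p.1 ≠ p.1 ∧ rep P p.2 ≠ p.2 ∧ p.1 ≠ p.2 := by
        intro p hp
        obtain ⟨u1, u2, u3⟩ := hMS.1 p hp
        exact ⟨u1, u2, fun he => u3 (he ▸ Setoid.refl' P p.1)⟩
      set f : Set M → complements P := fun n =>
        ⟨QB (rep P) (Subtype.val '' n)
          (fun p hp => hMpair p (Set.image_val_subset hp))
          (fun p hp q hq hne => hMS.2 p (Set.image_val_subset hp) q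
            (Set.image_val_subset hq) hne), by
          apply QB_mem P hrel hcong
          intro p hp
          exact (hMS.1 p (Set.image_val_subset hp)).2.2⟩ with hfdef
      have hfinj : Function.Injective f := by
        intro n1 n2 h
        have hQ := congrArg Subtype.val h
        simp only [hfdef] at hQ
        have hcross12 : ∀ p ∈ Subtype.val '' n1, ∀ q ∈ Subtype.val '' n2, p ≠ q →
            p.1 ≠ q.1 ∧ p.1 ≠ q.2 ∧ p.2 ≠ q.1 ∧ p.2 ≠ q.2 := fun p hp q hq hne =>
          hMS.2 p (Set.image_val_subset hp) q (Set.image_val_subset hq) hne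
        have hcross21 : ∀ p ∈ Subtype.val '' n2, ∀ q ∈ Subtype.val '' n1, p ≠ q →
            p.1 ≠ q.1 ∧ p.1 ≠ q.2 ∧ p.2 ≠ q.1 ∧ p.2 ≠ q.2 := fun p hp q hq hne =>
          hMS.2 p (Set.image_val_subset hp) q (Set.image_val_subset hq) hne
        have hss : Subtype.val '' n1 = Subtype.val '' n2 :=
          le_antisymm (QB_sub _ hcross12 hQ) (QB_sub _ hcross21 hQ.symm)
        exact Set.image_injective.mpr Subtype.val_injective hss
      calc (2 : Cardinal) ^ Cardinal.mk α = 2 ^ Cardinal.mk M := by rw [hMcard]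
        _ = Cardinal.mk (Set M) := Cardinal.mk_set.symm
        _ ≤ Cardinal.mk (complements P) := Cardinal.mk_le_of_injective hfinj
  exact le_antisymm hupper hlower
end

section
/- Let κ be an infinite cardinal and P a partition of κ containing a block B of cardinality κ. Then the number of complements of P in the partition lattice of κ is exactly κ^λ, where λ = |κ \ B|. -/
open Cardinal

section Aux

variable {α : Type u} (P : Setoid α) (a : α)

open Classical in
/-- The "closure" map used to build a complement from an injection of the complement of `B`
into `B`. -/
noncomputable def clMap (f : {b : α | ¬ P a b} → α) : α → α :=
  fun x => if h : ¬ P a x then f ⟨x, h⟩ else x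

theorem clMap_of_mem (f : {b : α | ¬ P a b} → α) {x : α} (hx : P a x) :
    clMap P a f x = x := dif_neg (not_not.mpr hx)

theorem clMap_of_notMem (f : {b : α | ¬ P a b} → α) {x : α} (hx : ¬ P a x) :
    clMap P a f x = f ⟨x, hx⟩ := dif_pos hx

theorem Qf_mem (f : {b : α | ¬ P a b} → α) (hfB : ∀ n, P a (f n))
    (hinj : Function.Injective f) :
    Setoid.ker (clMap P a f) ∈ complements P := by
  constructor
  · refine le_antisymm (Setoid.le_def.mpr ?_) bot_le
    rintro x y ⟨h1, h2⟩
    have h2' : clMap P a f x = clMap P a f y := h2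
    have : x = y := by
      by_cases hx : P a x <;> by_cases hy : P a y
      · rwa [clMap_of_mem P a f hx, clMap_of_mem P a f hy] at h2'
      · exact absurd (P.trans hx h1) hy
      · exact absurd (P.trans hy (P.symm h1)) hx
      · rw [clMap_of_notMem P a f hx, clMap_of_notMem P a f hy] at h2'
        exact congrArg Subtype.val (hinj h2')
    show (⊥ : Setoid α) x y
    rw [Setoid.bot_def]
    exact this
  · refine le_antisymm le_top (Setoid.le_def.mpr fun {x y} _ => ?_)
    set Q := Setoid.ker (clMap P a f) with hQ
    have hP : ∀ {u v}, P u v → (P ⊔ Q) u v := fun h => Setoid.le_def.mp le_sup_left h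
    have hQle : ∀ {u v}, Q u v → (P ⊔ Q) u v := fun h => Setoid.le_def.mp le_sup_right h
    have key : ∀ u, (P ⊔ Q) u a := by
      intro u
      by_cases hu : P a u
      · exact hP (P.symm hu)
      · have h1 : Q u (f ⟨u, hu⟩) := by
          show clMap P a f u = clMap P a f (f ⟨u, hu⟩)
          rw [clMap_of_notMem P a f hu, clMap_of_mem P a f (hfB ⟨u, hu⟩)]
        exact (P ⊔ Q).trans (hQle h1) (hP (P.symm (hfB ⟨u, hu⟩)))
    exact (P ⊔ Q).trans (key x) ((P ⊔ Q).symm (key y))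

theorem Qf_inj (f1 f2 : {b : α | ¬ P a b} → α) (hf1 : ∀ n, P a (f1 n))
    (_hf2 : ∀ n, P a (f2 n))
    (h : Setoid.ker (clMap P a f1) = Setoid.ker (clMap P a f2)) : f1 = f2 := by
  funext n
  have h1 : Setoid.ker (clMap P a f1) ↑n (f1 n) := by
    show clMap P a f1 ↑n = clMap P a f1 (f1 n)
    rw [clMap_of_notMem P a f1 n.2, clMap_of_mem P a f1 (hf1 n)]
  rw [h] at h1
  have h2 : clMap P a f2 ↑n = clMap P a f2 (f1 n) := h1
  rw [clMap_of_notMem P a f2 n.2, clMap_of_mem P a f2 (hf1 n)] at h2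
  exact h2.symm

/-- Representative function of the restriction of `Q` to the complement of the block. -/
noncomputable def repFn (Q : Setoid α) :
    {b : α | ¬ P a b} → {b : α | ¬ P a b} :=
  fun x => (Quotient.mk (Setoid.comap Subtype.val Q) x).out

theorem repFn_eq_iff (Q : Setoid α) (x y : {b : α | ¬ P a b}) :
    repFn P a Q x = repFn P a Q y ↔ Q ↑x ↑y := by
  constructor
  · intro h
    have hxy : (Quotient.mk (Setoid.comap Subtype.val Q) x)
        = Quotient.mk (Setoid.comap Subtype.val Q) y := by
      rw [← Quotient.out_eq (Quotient.mk (Setoid.comap Subtype.val Q) x),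
        ← Quotient.out_eq (Quotient.mk (Setoid.comap Subtype.val Q) y)]
      exact congrArg _ h
    have h2 : Setoid.comap Subtype.val Q x y := Quotient.exact hxy
    exact h2
  · intro h
    unfold repFn
    rw [Quotient.sound (show Setoid.comap Subtype.val Q x y from h)]

open Classical in
/-- The element of the block `B` attached to `x` by `Q`, if any. -/
noncomputable def attFn (Q : Setoid α) :
    {b : α | ¬ P a b} → Option {b : α | P a b} :=
  fun x => if h : ∃ b : {b : α | P a b}, Q ↑x ↑b then some h.choose else none

theorem uniqB {Q : Setoid α} (hQ : Q ∈ complements P) {u v : α}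
    (hu : P a u) (hv : P a v) (h : Q u v) : u = v := by
  have hm : (P ⊓ Q) u v := ⟨P.trans (P.symm hu) hv, h⟩
  rw [hQ.1] at hm
  rwa [show ((⊥ : Setoid α) u v) = (u = v) from congrFun (congrFun Setoid.bot_def u) v] at hm

theorem attFn_eq_some_iff {Q : Setoid α} (hQ : Q ∈ complements P)
    {x : {b : α | ¬ P a b}} {b : α} (hb : P a b) :
    Q ↑x b ↔ attFn P a Q x = some ⟨b, hb⟩ := by
  constructor
  · intro h
    have hex : ∃ c : {b : α | P a b}, Q ↑x ↑c := ⟨⟨b, hb⟩, h⟩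
    have hc : Q ↑x ↑hex.choose := hex.choose_spec
    have : (hex.choose : α) = b := uniqB P a hQ hex.choose.2 hb (Q.trans (Q.symm hc) h)
    rw [attFn, dif_pos hex]
    exact congrArg some (Subtype.ext this)
  · intro h
    by_cases hex : ∃ c : {b : α | P a b}, Q ↑x ↑c
    · rw [attFn, dif_pos hex] at h
      have := hex.choose_spec
      rwa [Option.some_inj.mp h] at this
    · rw [attFn, dif_neg hex] at h
      exact absurd h (by simp)

theorem F_inj {Q1 Q2 : Setoid α} (h1 : Q1 ∈ complements P) (h2 : Q2 ∈ complements P)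
    (hrep : repFn P a Q1 = repFn P a Q2) (hatt : attFn P a Q1 = attFn P a Q2) :
    Q1 ≤ Q2 := by
  refine Setoid.le_def.mpr fun {x y} hxy => ?_
  by_cases hx : P a x <;> by_cases hy : P a y
  · rw [uniqB P a h1 hx hy hxy]
  · -- x ∈ B, y ∉ B
    have h' : Q1 ↑(⟨y, hy⟩ : {b : α | ¬ P a b}) x := Q1.symm hxy
    have := (attFn_eq_some_iff P a h1 (x := ⟨y, hy⟩) hx).mp h'
    rw [hatt] at this
    exact Q2.symm ((attFn_eq_some_iff P a h2 (x := ⟨y, hy⟩) hx).mpr this)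
  · -- x ∉ B, y ∈ B
    have := (attFn_eq_some_iff P a h1 (x := ⟨x, hx⟩) hy).mp hxy
    rw [hatt] at this
    exact (attFn_eq_some_iff P a h2 (x := ⟨x, hx⟩) hy).mpr this
  · have h' := (repFn_eq_iff P a Q1 ⟨x, hx⟩ ⟨y, hy⟩).mpr hxy
    rw [hrep] at h'
    exact (repFn_eq_iff P a Q2 ⟨x, hx⟩ ⟨y, hy⟩).mp h'

end Aux

/-- If a partition `P` of an infinite cardinal κ has a block `B` (the class of `a`)
of cardinality κ, then `P` has exactly `κ^λ` complements, where `λ = |κ \ B|`. -/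
theorem stmt_15 {α : Type u} (hα : Cardinal.aleph0 ≤ Cardinal.mk α)
    (P : Setoid α) (a : α)
    (hB : Cardinal.mk {b : α | P a b} = Cardinal.mk α) :
    Cardinal.mk (complements P) = Cardinal.mk α ^ Cardinal.mk {b : α | ¬ P a b} := by
  classical
  have hNle : #{b : α | ¬ P a b} ≤ #α := mk_set_le _
  refine le_antisymm ?_ ?_
  · -- upper bound
    have hinj : Function.Injective (fun Q : complements P =>
        fun x : {b : α | ¬ P a b} => (repFn P a ↑Q x, attFn P a ↑Q x)) := by
      intro Q1 Q2 h
      have hrep : repFn P a ↑Q1 = repFn P a ↑Q2 :=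
        funext fun x => congrArg Prod.fst (congrFun h x)
      have hatt : attFn P a ↑Q1 = attFn P a ↑Q2 :=
        funext fun x => congrArg Prod.snd (congrFun h x)
      exact Subtype.ext (le_antisymm (F_inj P a Q1.2 Q2.2 hrep hatt)
        (F_inj P a Q2.2 Q1.2 hrep.symm hatt.symm))
    calc #(complements P)
        ≤ #({b : α | ¬ P a b} → {b : α | ¬ P a b} × Option {b : α | P a b}) :=
          mk_le_of_injective hinj
      _ = #({b : α | ¬ P a b} × Option {b : α | P a b}) ^ #{b : α | ¬ P a b} :=
          (power_def _ _).symm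
      _ ≤ #α ^ #{b : α | ¬ P a b} := by
          apply power_le_power_right
          simp only [mk_prod, lift_id, mk_option]
          rw [hB]
          calc #{b : α | ¬ P a b} * (#α + 1) = #{b : α | ¬ P a b} * #α := by
                rw [add_one_eq hα]
            _ ≤ #α * #α := mul_le_mul_left hNle _
            _ = #α := mul_eq_self hα
  · -- lower bound
    obtain ⟨e⟩ : Nonempty (({b : α | P a b} × {b : α | P a b}) ≃ {b : α | P a b}) := by
      apply Cardinal.eq.mp
      simp only [mk_prod, lift_id]
      rw [hB, mul_eq_self hα]
    obtain ⟨e0⟩ : Nonempty ({b : α | ¬ P a b} ↪ {b : α | P a b}) :=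
      (Cardinal.le_def _ _).mp (hNle.trans_eq hB.symm)
    set f : ({b : α | ¬ P a b} → {b : α | P a b}) → {b : α | ¬ P a b} → α :=
      fun g n => ((e (e0 n, g n) : {b : α | P a b}) : α) with hf
    have hfB : ∀ g n, P a (f g n) := fun g n => (e (e0 n, g n)).2
    have hfinj : ∀ g, Function.Injective (f g) := by
      intro g n m h
      have := e.injective (Subtype.ext h)
      exact e0.injective (congrArg Prod.fst this)
    have key : Function.Injective (fun g : {b : α | ¬ P a b} → {b : α | P a b} =>
        (⟨Setoid.ker (clMap P a (f g)), Qf_mem P a (f g) (hfB g) (hfinj g)⟩ :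
          complements P)) := by
      intro g1 g2 h
      have h' : f g1 = f g2 :=
        Qf_inj P a (f g1) (f g2) (hfB g1) (hfB g2) (Subtype.ext_iff.mp h)
      funext n
      have : ((e (e0 n, g1 n) : {b : α | P a b}) : α) = e (e0 n, g2 n) :=
        congrFun h' n
      have he := e.injective (Subtype.ext this)
      exact congrArg Prod.snd he
    calc #α ^ #{b : α | ¬ P a b} = #{b : α | P a b} ^ #{b : α | ¬ P a b} := by rw [hB]
      _ = #({b : α | ¬ P a b} → {b : α | P a b}) := power_def _ _
      _ ≤ #(complements P) := mk_le_of_injective key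
end

section
/- Let κ be an infinite cardinal and P a partition of κ containing at least two blocks of cardinality κ. Then P has exactly 2^κ complements in the partition lattice of κ. -/
open Cardinal

namespace Stmt16

variable {α : Type u} (P : Setoid α)

noncomputable def rep (P : Setoid α) (x : α) : α := (Quotient.mk P x).out

theorem rep_rel (x : α) : P x (rep P x) :=
  Quotient.exact ((Quotient.mk P x).out_eq).symm

theorem rep_eq {x y : α} (h : P x y) : rep P x = rep P y :=
  congrArg Quotient.out (Quotient.sound h)

theorem rep_rep (x : α) : rep P (rep P x) = rep P x :=
  (rep_eq P (rep_rel P x)).symm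

theorem rel_of_rep_eq {x y : α} (h : rep P x = rep P y) : P x y :=
  P.iseqv.trans (rep_rel P x) (h ▸ P.iseqv.symm (rep_rel P y))

variable (a b : α)

theorem hRA {x : α} (hx : x ∈ Set.range (rep P)) (hax : P a x) : x = rep P a := by
  obtain ⟨y, rfl⟩ := hx
  exact ((rep_eq P hax).trans (rep_rep P y)).symm

/-- The domain of the matching. -/
def Dom (x : α) : Prop :=
  x ∈ Set.range (rep P) \ {rep P a} ∨ x ∈ {x : α | P b x} \ {rep P b}

variable (g : (↥(Set.range (rep P) \ {rep P a}) ⊕ ↥({x : α | P b x} \ {rep P b})) →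
  ↥({x : α | P a x} \ {rep P a}))

/-- The matching relation indexed by `S`. -/
def mrel (S : Set ↥({x : α | P b x} \ {rep P b})) (x y : α) : Prop :=
  (∃ h : x ∈ Set.range (rep P) \ {rep P a}, y = ↑(g (Sum.inl ⟨x, h⟩))) ∨
  (∃ h : x ∈ {x : α | P b x} \ {rep P b}, ⟨x, h⟩ ∈ S ∧ y = ↑(g (Sum.inr ⟨x, h⟩)))

variable {P a b g}

theorem mrel_dom {S x y} (h : mrel P a b g S x y) : Dom P a b x := by
  rcases h with ⟨h, _⟩ | ⟨h, _, _⟩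
  · exact Or.inl h
  · exact Or.inr h

theorem mrel_ran {S x y} (h : mrel P a b g S x y) :
    y ∈ {x : α | P a x} \ {rep P a} := by
  rcases h with ⟨h, rfl⟩ | ⟨h, _, rfl⟩ <;> exact (g _).2

theorem dom_notA (hab : ¬ P a b) {x : α} (h1 : Dom P a b x) (h2 : P a x) : False := by
  rcases h1 with h1 | h1
  · exact h1.2 (hRA P a h1.1 h2)
  · exact hab (P.iseqv.trans h2 (P.iseqv.symm h1.1))

theorem mrel_fun {S x y z} (hxy : mrel P a b g S x y) (hxz : mrel P a b g S x z) :
    y = z := by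
  rcases hxy with ⟨h1, rfl⟩ | ⟨h1, _, rfl⟩ <;> rcases hxz with ⟨h2, rfl⟩ | ⟨h2, _, rfl⟩
  · rfl
  · exact absurd (hRA P b h1.1 h2.1) (by simpa using h2.2)
  · exact absurd (hRA P b h2.1 h1.1) (by simpa using h1.2)
  · rfl

theorem mrel_inj (hg : Function.Injective g) {S x y z}
    (hxy : mrel P a b g S x y) (hzy : mrel P a b g S z y) : x = z := by
  rcases hxy with ⟨h1, e1⟩ | ⟨h1, _, e1⟩ <;> rcases hzy with ⟨h2, e2⟩ | ⟨h2, _, e2⟩ <;>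
    have h := hg (Subtype.coe_injective (e1.symm.trans e2))
  · exact congrArg Subtype.val (Sum.inl.inj h)
  · exact (Sum.inl_ne_inr h).elim
  · exact (Sum.inr_ne_inl h).elim
  · exact congrArg Subtype.val (Sum.inr.inj h)

variable (P a b g)

/-- The complement associated to `S`. -/
def QS (hab : ¬ P a b) (hg : Function.Injective g)
    (S : Set ↥({x : α | P b x} \ {rep P b})) : Setoid α where
  r x y := x = y ∨ mrel P a b g S x y ∨ mrel P a b g S y x
  iseqv := by
    refine ⟨fun x => Or.inl rfl, ?_, ?_⟩
    · rintro x y (rfl | h | h)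
      · exact Or.inl rfl
      · exact Or.inr (Or.inr h)
      · exact Or.inr (Or.inl h)
    · rintro x y z (rfl | hxy | hyx) h2
      · exact h2
      · rcases h2 with rfl | hyz | hzy
        · exact Or.inr (Or.inl hxy)
        · exact (dom_notA hab (mrel_dom hyz) (mrel_ran hxy).1).elim
        · exact Or.inl (mrel_inj hg hxy hzy)
      · rcases h2 with rfl | hyz | hzy
        · exact Or.inr (Or.inr hyx)
        · exact Or.inl (mrel_fun hyx hyz)
        · exact (dom_notA hab (mrel_dom hyx) (mrel_ran hzy).1).elim

theorem QS_iff (hab hg S) {x y : α} :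
    QS P a b g hab hg S x y ↔ x = y ∨ mrel P a b g S x y ∨ mrel P a b g S y x :=
  Iff.rfl

theorem QS_inf (hab hg S) : P ⊓ QS P a b g hab hg S = ⊥ := by
  rw [eq_bot_iff, Setoid.le_def]
  intro x y h
  have hP : P x y := (Setoid.inf_iff_and.mp h).1
  have hQ := (Setoid.inf_iff_and.mp h).2
  show x = y
  rcases (QS_iff P a b g hab hg S).mp hQ with rfl | hm | hm
  · rfl
  · exact (dom_notA hab (mrel_dom hm)
      (P.iseqv.trans (mrel_ran hm).1 (P.iseqv.symm hP))).elim
  · exact (dom_notA hab (mrel_dom hm)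
      (P.iseqv.trans (mrel_ran hm).1 hP)).elim

theorem QS_sup (hab hg S) : P ⊔ QS P a b g hab hg S = ⊤ := by
  rw [eq_top_iff, Setoid.le_def]
  set J := P ⊔ QS P a b g hab hg S with hJ
  have hPJ : ∀ {u v}, P u v → J u v := fun h => Setoid.le_def.mp le_sup_left h
  have hQJ : ∀ {u v}, QS P a b g hab hg S u v → J u v :=
    fun h => Setoid.le_def.mp le_sup_right h
  have claim : ∀ u, J a u := by
    intro u
    have h1 : P u (rep P u) := rep_rel P u
    by_cases hc : rep P u = rep P a
    · exact hPJ (rel_of_rep_eq P hc.symm)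
    · have hmem : rep P u ∈ Set.range (rep P) \ {rep P a} := ⟨⟨u, rfl⟩, hc⟩
      have hQ : QS P a b g hab hg S (rep P u) ↑(g (Sum.inl ⟨rep P u, hmem⟩)) :=
        Or.inr (Or.inl (Or.inl ⟨hmem, rfl⟩))
      have hga : P a ↑(g (Sum.inl ⟨rep P u, hmem⟩)) := (g _).2.1
      exact J.iseqv.trans (hPJ hga)
        (J.iseqv.trans (J.iseqv.symm (hQJ hQ)) (J.iseqv.symm (hPJ h1)))
  intro x y _
  exact J.iseqv.trans (J.iseqv.symm (claim x)) (claim y)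

theorem QS_subset (hab hg) {S T} (h : QS P a b g hab hg S = QS P a b g hab hg T) :
    S ⊆ T := by
  intro b' hb'
  have h1 : QS P a b g hab hg S ↑b' ↑(g (Sum.inr b')) :=
    Or.inr (Or.inl (Or.inr ⟨b'.2, hb', rfl⟩))
  rw [h] at h1
  rcases (QS_iff P a b g hab hg T).mp h1 with heq | hm | hm
  · have hpa : P a ↑b' := heq ▸ (g (Sum.inr b')).2.1
    exact (hab (P.iseqv.trans hpa (P.iseqv.symm b'.2.1))).elim
  · rcases hm with ⟨h2, _⟩ | ⟨h2, hT, _⟩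
    · exact absurd (hRA P b h2.1 b'.2.1) (by simpa using b'.2.2)
    · exact hT
  · exact (dom_notA hab (mrel_dom hm) (g (Sum.inr b')).2.1).elim

end Stmt16

open Stmt16

theorem mk_diff_singleton {α : Type u} {s : Set α} {x : α} (hx : x ∈ s)
    (hs : Cardinal.aleph0 ≤ #s) : #(s \ {x} : Set α) = #s := by
  have h1 : #(s \ {x} : Set α) + #({x} : Set α) = #s :=
    Cardinal.mk_diff_add_mk (by simpa using hx)
  rw [Cardinal.mk_singleton] at h1
  have h2 : Cardinal.aleph0 ≤ #(s \ {x} : Set α) := by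
    by_contra hcon
    push_neg at hcon
    exact absurd hs (not_le.mpr (h1 ▸ Cardinal.add_lt_aleph0 hcon Cardinal.one_lt_aleph0))
  rw [Cardinal.add_one_eq h2] at h1
  exact h1

/-- If a partition `P` of an infinite cardinal κ has at least two distinct blocks of
cardinality κ, then `P` has exactly `2^κ` complements. -/
theorem stmt_16 {α : Type u} (hα : Cardinal.aleph0 ≤ Cardinal.mk α)
    (P : Setoid α) (a b : α) (hab : ¬ P a b)
    (ha : Cardinal.mk {x : α | P a x} = Cardinal.mk α)
    (hb : Cardinal.mk {x : α | P b x} = Cardinal.mk α) :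
    Cardinal.mk (complements P) = 2 ^ Cardinal.mk α := by
  classical
  -- upper bound
  have hup : #(complements P) ≤ 2 ^ #α := by
    have hinj : Function.Injective (fun (Q : Setoid α) => {p : α × α | Q p.1 p.2}) := by
      intro Q1 Q2 h
      exact Setoid.ext fun x y => by
        simpa using Set.ext_iff.mp h (x, y)
    calc #(complements P) ≤ #(Setoid α) := Cardinal.mk_set_le _
      _ ≤ #(Set (α × α)) := Cardinal.mk_le_of_injective hinj
      _ = 2 ^ #(α × α) := Cardinal.mk_set
      _ = 2 ^ (#α * #α) := by rw [Cardinal.mk_prod, Cardinal.lift_id]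
      _ = 2 ^ #α := by rw [Cardinal.mul_eq_self hα]
  -- lower bound
  have hra : rep P a ∈ {x : α | P a x} := rep_rel P a
  have hrb : rep P b ∈ {x : α | P b x} := rep_rel P b
  have hA : #({x : α | P a x} \ {rep P a} : Set α) = #α := by
    rw [mk_diff_singleton hra (ha ▸ hα), ha]
  have hB : #({x : α | P b x} \ {rep P b} : Set α) = #α := by
    rw [mk_diff_singleton hrb (hb ▸ hα), hb]
  have hle : #(↥(Set.range (rep P) \ {rep P a}) ⊕ ↥({x : α | P b x} \ {rep P b}))
      ≤ #(↥({x : α | P a x} \ {rep P a})) := by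
    rw [Cardinal.mk_sum]; simp only [Cardinal.lift_id]
    calc #(Set.range (rep P) \ {rep P a} : Set α) + #({x : α | P b x} \ {rep P b} : Set α)
        ≤ #α + #α := add_le_add (Cardinal.mk_set_le _) (Cardinal.mk_set_le _)
      _ = #α := Cardinal.add_eq_self hα
      _ = _ := hA.symm
  obtain ⟨g⟩ := Cardinal.le_def _ _ |>.mp hle
  have hg : Function.Injective (⇑g) := g.injective
  set F : Set ↥({x : α | P b x} \ {rep P b}) → ↥(complements P) :=
    fun S => ⟨QS P a b (⇑g) hab hg S, QS_inf P a b (⇑g) hab hg S, QS_sup P a b (⇑g) hab hg S⟩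
    with hF
  have hFinj : Function.Injective F := by
    intro S T h
    have h' : QS P a b (⇑g) hab hg S = QS P a b (⇑g) hab hg T := congrArg Subtype.val h
    exact le_antisymm (QS_subset P a b (⇑g) hab hg h') (QS_subset P a b (⇑g) hab hg h'.symm)
  have hlow : 2 ^ #α ≤ #(complements P) := by
    calc 2 ^ #α = 2 ^ #({x : α | P b x} \ {rep P b} : Set α) := by rw [hB]
      _ = #(Set ↥({x : α | P b x} \ {rep P b})) := Cardinal.mk_set.symm
      _ ≤ #(complements P) := Cardinal.mk_le_of_injective hFinj
  exact le_antisymm hup hlow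
end

section
/- Let κ be an infinite cardinal and P ∉ {⊥, ⊤} a partition of κ. Then κ ≤ |compl(P)| ≤ 2^κ, where compl(P) denotes the set of complements of P in the partition lattice of κ. -/
/-- A setoid with (at most) two non-singleton blocks: `C` and `S \ C`. -/
def twoBlockSetoid {α : Type u} (C S : Set α) : Setoid α where
  r u v := u = v ∨ (u ∈ C ∧ v ∈ C) ∨ (u ∈ S ∧ u ∉ C ∧ v ∈ S ∧ v ∉ C)
  iseqv := by
    refine ⟨fun x => Or.inl rfl, ?_, ?_⟩
    · rintro x y (rfl | h | h) <;> tauto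
    · rintro x y z (rfl | hx | hx) (rfl | hy | hy) <;> tauto

theorem twoBlockSetoid_iff {α : Type u} (C S : Set α) (u v : α) :
    twoBlockSetoid C S u v ↔
      u = v ∨ (u ∈ C ∧ v ∈ C) ∨ (u ∈ S ∧ u ∉ C ∧ v ∈ S ∧ v ∉ C) := Iff.rfl

/-- For an infinite cardinal κ and any non-trivial partition `P` of κ,
`κ ≤ |compl(P)| ≤ 2^κ`. -/
theorem stmt_17 {α : Type u} (hα : Cardinal.aleph0 ≤ Cardinal.mk α)
    (P : Setoid α) (hbot : P ≠ ⊥) (htop : P ≠ ⊤) :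
    Cardinal.mk α ≤ Cardinal.mk (complements P) ∧
      Cardinal.mk (complements P) ≤ 2 ^ Cardinal.mk α := by
  classical
  have hInf : Infinite α := Cardinal.infinite_iff.mpr hα
  -- a nontrivial P-class gives `a ≠ b` with `P a b`
  obtain ⟨a, b, hPab, hab⟩ : ∃ a b, P a b ∧ a ≠ b := by
    by_contra h
    push_neg at h
    exact hbot (le_antisymm (fun x y hxy => h x y hxy) bot_le)
  -- P ≠ ⊤ gives two unrelated points
  obtain ⟨u0, v0, hP0⟩ : ∃ u v, ¬ P u v := by
    by_contra h
    push_neg at h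
    exact htop (Setoid.eq_top_iff.mpr h)
  -- the transversal map
  set t : α → α := fun x => (Quotient.mk'' x : Quotient P).out with ht_def
  have htP : ∀ x, P (t x) x := fun x => Quotient.mk_out' x
  have hteq : ∀ {x y}, P x y → t x = t y := fun h => congrArg Quotient.out (Quotient.sound' h)
  have htt : ∀ x, t (t x) = t x := fun x => hteq (htP x)
  -- b1 : an element of the class of `t a` distinct from `t a`
  set b1 : α := if t a = a then b else a with hb1_def
  have hb1 : P (t a) b1 ∧ t a ≠ b1 := by
    by_cases h : t a = a
    · rw [hb1_def, if_pos h, h]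
      exact ⟨hPab, hab⟩
    · rw [hb1_def, if_neg h]
      exact ⟨htP a, h⟩
  have hb1t : ∀ z, t z ≠ b1 := by
    intro z hz
    have h1 : t b1 = t a := (hteq (P.symm hb1.1)).trans (htt a)
    have h2 : t b1 = b1 := by rw [← hz, htt, hz]
    exact hb1.2 (h1 ▸ h2)
  -- t1 : a transversal element not in the class of `t a`
  set w : α := if P u0 (t a) then v0 else u0 with hw_def
  have hw : ¬ P w (t a) := by
    by_cases h : P u0 (t a)
    · rw [hw_def, if_pos h]
      exact fun hv => hP0 (P.trans h (P.symm hv))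
    · rw [hw_def, if_neg h]
      exact h
  set t1 : α := t w with ht1_def
  have ht1 : ¬ P t1 (t a) := fun h => hw (P.trans (P.symm (htP w)) h)
  have ht1b0 : t1 ≠ t a := fun h => ht1 (h ▸ P.refl (t a))
  have htt1 : t t1 = t1 := htt w
  -- the family of complements
  set pf : α → α := fun x => if P x (t a) then t1 else b1 with hpf_def
  set rf : α → α := fun x => if P x (t a) then t1 else t x with hrf_def
  set Q : α → Setoid α := fun x =>
    twoBlockSetoid ({pf x, x} : Set α) (Set.range t \ {rf x}) with hQ_def
  have hQiff : ∀ x u v, Q x u v ↔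
      u = v ∨ (u ∈ ({pf x, x} : Set α) ∧ v ∈ ({pf x, x} : Set α)) ∨
        (u ∈ Set.range t \ {rf x} ∧ u ∉ ({pf x, x} : Set α) ∧
          v ∈ Set.range t \ {rf x} ∧ v ∉ ({pf x, x} : Set α)) := by
    intro x u v; rfl
  -- two elements of the range of t related by P are equal
  have hrange : ∀ u v, u ∈ Set.range t → v ∈ Set.range t → P u v → u = v := by
    rintro u v ⟨c, rfl⟩ ⟨d, rfl⟩ h
    calc t c = t (t c) := (htt c).symm
      _ = t (t d) := hteq h
      _ = t d := htt d
  -- p x is never P-related to x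
  have hpfx : ∀ x, ¬ P (pf x) x := by
    intro x hpx
    by_cases h : P x (t a)
    · rw [hpf_def] at hpx; simp only [if_pos h] at hpx
      exact ht1 (P.trans hpx h)
    · rw [hpf_def] at hpx; simp only [if_neg h] at hpx
      exact h (P.trans (P.symm hpx) (P.symm hb1.1))
  -- the meet is ⊥
  have hmeet : ∀ x, P ⊓ Q x = ⊥ := by
    intro x
    refine le_antisymm (fun u v huv => ?_) bot_le
    obtain ⟨hPuv, hQuv⟩ := Setoid.inf_iff_and.mp huv
    show u = v
    rcases (hQiff x u v).mp hQuv with rfl | ⟨hu, hv⟩ | ⟨⟨hu, _⟩, _, ⟨hv, _⟩, _⟩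
    · rfl
    · rw [Set.mem_insert_iff, Set.mem_singleton_iff] at hu hv
      rcases hu with hu | hu <;> rcases hv with hv | hv <;> rw [hu, hv] at hPuv ⊢
      · exact absurd hPuv (hpfx x)
      · exact absurd (P.symm hPuv) (hpfx x)
    · exact hrange u v hu hv hPuv
  -- the join is ⊤ (for x ≠ t a)
  have hjoin : ∀ x, x ≠ t a → P ⊔ Q x = ⊤ := by
    intro x hx1
    set R : Setoid α := P ⊔ Q x with hR_def
    have hP' : ∀ {u v}, P u v → R u v := fun h => (le_sup_left : P ≤ R) h
    have hQ' : ∀ {u v}, Q x u v → R u v := fun h => (le_sup_right : Q x ≤ R) h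
    -- x is connected to t a
    have hxchain : R x (t a) := by
      by_cases hxB : P x (t a)
      · exact hP' hxB
      · have h1 : Q x x (pf x) :=
          (hQiff x _ _).mpr (Or.inr (Or.inl ⟨Or.inr rfl, Or.inl rfl⟩))
        have h2 : pf x = b1 := by rw [hpf_def]; simp only [if_neg hxB]
        exact R.trans (hQ' h1) (h2 ▸ hP' (P.symm hb1.1))
    -- pf x is connected to t a
    have hpchain : R (pf x) (t a) := by
      have h1 : Q x (pf x) x :=
        (hQiff x _ _).mpr (Or.inr (Or.inl ⟨Or.inl rfl, Or.inr rfl⟩))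
      exact R.trans (hQ' h1) hxchain
    -- t a is not in {pf x, x} and not equal to rf x
    have htaC : (t a) ∉ ({pf x, x} : Set α) := by
      rintro (h | h)
      · by_cases hxB : P x (t a)
        · rw [hpf_def] at h; simp only [if_pos hxB] at h
          exact ht1b0 h.symm
        · rw [hpf_def] at h; simp only [if_neg hxB] at h
          exact hb1.2 h
      · exact hx1 h.symm
    have htar : t a ≠ rf x := by
      by_cases hxB : P x (t a)
      · rw [hrf_def]; simp only [if_pos hxB]
        exact fun h => ht1b0 h.symm
      · rw [hrf_def]; simp only [if_neg hxB]
        intro h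
        exact hxB (P.symm (h ▸ htP x))
    -- every z is connected to t a
    have key : ∀ z, R z (t a) := by
      intro z
      have hz : R z (t z) := hP' (P.symm (htP z))
      by_cases htzC : t z ∈ ({pf x, x} : Set α)
      · rcases htzC with h | h
        · exact R.trans hz (h ▸ hpchain)
        · exact R.trans hz (h ▸ hxchain)
      · by_cases htzr : t z = rf x
        · by_cases hxB : P x (t a)
          · exfalso
            apply htzC
            rw [hrf_def] at htzr; simp only [if_pos hxB] at htzr
            rw [hpf_def]; simp only [if_pos hxB]
            exact Or.inl htzr
          · rw [hrf_def] at htzr; simp only [if_neg hxB] at htzr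
            -- t z = t x, so z is P-related to x
            have hzx : P z x := P.trans (P.symm (htP z)) (htzr ▸ htP x)
            exact R.trans (hP' hzx) hxchain
        · have h1 : Q x (t z) (t a) :=
            (hQiff x _ _).mpr (Or.inr (Or.inr
              ⟨⟨⟨z, rfl⟩, htzr⟩, htzC, ⟨⟨a, rfl⟩, fun h => htar h⟩, htaC⟩))
          exact R.trans hz (hQ' h1)
    rw [Setoid.eq_top_iff]
    exact fun y z => R.trans (key y) (R.symm (key z))
  -- the domain set
  set s : Set α := ({t a, t1} : Set α)ᶜ with hs_def
  have hs_mem : ∀ y ∈ s, y ≠ t a ∧ y ≠ t1 := by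
    intro y hy
    rw [hs_def, Set.mem_compl_iff, Set.mem_insert_iff, Set.mem_singleton_iff] at hy
    push_neg at hy
    exact hy
  -- the injection
  set f : s → complements P := fun y => ⟨Q y, hmeet y, hjoin y (hs_mem y y.2).1⟩ with hf_def
  have hfinj : Function.Injective f := by
    rintro ⟨x, hx⟩ ⟨y, hy⟩ hfxy
    obtain ⟨hx1, hx2⟩ := hs_mem x hx
    obtain ⟨hy1, hy2⟩ := hs_mem y hy
    have hQxy : Q x = Q y := congrArg Subtype.val hfxy
    apply Subtype.ext
    show x = y
    have h1 : Q y (pf x) x := by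
      rw [← hQxy]
      exact (hQiff x _ _).mpr (Or.inr (Or.inl ⟨Or.inl rfl, Or.inr rfl⟩))
    rcases (hQiff y _ _).mp h1 with heq | ⟨hu, hv⟩ | ⟨⟨hu, _⟩, _, ⟨hv, _⟩, _⟩
    · -- pf x = x : impossible
      exfalso
      by_cases hxB : P x (t a)
      · rw [hpf_def] at heq; simp only [if_pos hxB] at heq
        exact hx2 heq.symm
      · rw [hpf_def] at heq; simp only [if_neg hxB] at heq
        exact hxB (P.trans (P.symm (heq ▸ P.refl b1)) (P.symm hb1.1))
    · -- x ∈ {pf y, y}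
      rcases hv with hv | hv
      · -- x = pf y : impossible
        exfalso
        by_cases hyB : P y (t a)
        · rw [hpf_def] at hv; simp only [if_pos hyB] at hv
          exact hx2 hv
        · rw [hpf_def] at hv; simp only [if_neg hyB] at hv
          -- x = b1, so P x (t a); then pf x = t1 ∈ {pf y, y} = {b1, y}
          have hxB : P x (t a) := hv ▸ P.symm hb1.1
          have hpx : pf x = t1 := by rw [hpf_def]; simp only [if_pos hxB]
          rw [hpx, hpf_def] at hu; simp only [if_neg hyB] at hu
          rcases hu with h | h
          · exact hb1t w h
          · exact hy2 h.symm
      · exact hv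
    · -- x ∈ range t \ {rf y} : impossible
      exfalso
      by_cases hxB : P x (t a)
      · -- x ∈ range t and P x (t a) forces x = t a
        apply hx1
        exact hrange x (t a) hv ⟨a, rfl⟩ hxB
      · -- pf x = b1 ∈ range t : impossible
        have hpx : pf x = b1 := by rw [hpf_def]; simp only [if_neg hxB]
        rw [hpx] at hu
        obtain ⟨c, hc⟩ := hu
        exact hb1t c hc
  constructor
  · -- lower bound
    have hcard : Cardinal.mk s = Cardinal.mk α := by
      apply Cardinal.mk_compl_of_infinite
      exact lt_of_lt_of_le (Set.Finite.lt_aleph0 (Set.toFinite _)) hα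
    calc Cardinal.mk α = Cardinal.mk s := hcard.symm
      _ ≤ Cardinal.mk (complements P) := Cardinal.mk_le_of_injective hfinj
  · -- upper bound
    have h1 : Cardinal.mk (complements P) ≤ Cardinal.mk (Setoid α) :=
      Cardinal.mk_le_of_injective Subtype.coe_injective
    have h2 : Cardinal.mk (Setoid α) ≤ Cardinal.mk (α → α → Prop) := by
      apply Cardinal.mk_le_of_injective (f := fun (Q : Setoid α) => ⇑Q)
      intro Q R h
      ext x y
      exact iff_of_eq (congrFun (congrFun h x) y)
    have h3 : Cardinal.mk (α → α → Prop) = 2 ^ (Cardinal.mk α * Cardinal.mk α) := by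
      simp [← Cardinal.power_def, Cardinal.mk_Prop, ← Cardinal.power_mul, mul_comm]
    calc Cardinal.mk (complements P) ≤ Cardinal.mk (α → α → Prop) := h1.trans h2
      _ = 2 ^ (Cardinal.mk α * Cardinal.mk α) := h3
      _ = 2 ^ Cardinal.mk α := by rw [Cardinal.mul_eq_self hα]
end

section
/- For every infinite cardinal κ and every cardinal λ with 0 ≤ λ ≤ κ, there exists a partition P of κ whose set of complements in the partition lattice of κ has cardinality exactly κ^λ; moreover, every partition of κ has κ^λ complements for some such λ. -/
open Cardinal

section Helpers
universe v
variable {α : Type v}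

lemma inf_eq_bot_iff' {P Q : Setoid α} :
    P ⊓ Q = ⊥ ↔ ∀ x y, P x y → Q x y → x = y := by
  constructor
  · intro h x y hp hq
    have h2 : (P ⊓ Q) x y := Setoid.inf_iff_and.mpr ⟨hp, hq⟩
    rw [h] at h2
    exact h2
  · intro h
    refine le_antisymm ?_ bot_le
    rw [Setoid.le_def]
    intro x y hxy
    have := Setoid.inf_iff_and.mp hxy
    have hx : x = y := h x y this.1 this.2
    subst hx
    exact Setoid.refl' ⊥ x

lemma sup_eq_top_of_rel_all {P Q : Setoid α} (a : α)
    (h : ∀ x, (P ⊔ Q) x a) : P ⊔ Q = ⊤ := by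
  rw [Setoid.eq_top_iff]
  intro x y
  exact Setoid.trans' _ (h x) (Setoid.symm' _ (h y))

lemma rel_sup_left {P Q : Setoid α} {x y : α} (h : P x y) : (P ⊔ Q) x y :=
  Setoid.le_def.mp le_sup_left h

lemma rel_sup_right {P Q : Setoid α} {x y : α} (h : Q x y) : (P ⊔ Q) x y :=
  Setoid.le_def.mp le_sup_right h

lemma complements_bot : complements (⊥ : Setoid α) = {⊤} := by
  ext Q
  constructor
  · rintro ⟨h1, h2⟩
    have : (⊥ : Setoid α) ⊔ Q = Q := bot_sup_eq Q
    rw [this] at h2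
    exact h2
  · rintro rfl
    exact ⟨by rw [bot_inf_eq], by rw [sup_top_eq]⟩

lemma exists_pair_of_ne_bot {P : Setoid α} (h : P ≠ ⊥) :
    ∃ a b : α, P a b ∧ a ≠ b := by
  by_contra hcon
  push_neg at hcon
  apply h
  apply Setoid.ext
  intro x y
  constructor
  · intro hxy
    rcases eq_or_ne x y with rfl | hne
    · exact Setoid.refl' ⊥ x
    · exact absurd (hcon x y hxy) (by simpa using hne)
  · intro hxy
    have : x = y := hxy
    subst this
    exact Setoid.refl' P x

end Helpers

section Main
variable {α : Type u}

lemma pow_absorb {k : Cardinal.{u}} (hk : ℵ₀ ≤ k) (t : Cardinal.{u}) :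
    k ^ t * k ^ t = k ^ t := by
  rcases eq_or_ne t 0 with rfl | ht
  · simp
  · exact Cardinal.mul_eq_self (hk.trans (Cardinal.self_le_power k (Cardinal.one_le_iff_ne_zero.2 ht)))

lemma pow_pow_absorb {k : Cardinal.{u}} (hk : ℵ₀ ≤ k) (t : Cardinal.{u}) :
    (k ^ t) ^ t = k ^ t := by
  rw [← Cardinal.power_mul]
  rcases eq_or_ne t 0 with rfl | ht
  · simp
  · rcases lt_or_ge t ℵ₀ with hfin | hinf
    · obtain ⟨n, rfl⟩ := Cardinal.lt_aleph0.1 hfin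
      have hn : 1 ≤ n := by
        rcases Nat.eq_zero_or_pos n with rfl | h
        · simp at ht
        · exact h
      have : ((n : Cardinal) * n) = ((n * n : ℕ) : Cardinal) := by push_cast; ring
      rw [this, Cardinal.power_natCast, Cardinal.power_natCast,
        Cardinal.power_nat_eq hk (Nat.one_le_iff_ne_zero.2 (by positivity)),
        Cardinal.power_nat_eq hk hn]
    · rw [Cardinal.mul_eq_self hinf]

lemma two_le_k {k : Cardinal.{u}} (hk : ℵ₀ ≤ k) : (2 : Cardinal) ≤ k :=
  le_trans (le_of_lt (by exact_mod_cast Cardinal.nat_lt_aleph0 2)) hk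

lemma mk_complements_le (hα : ℵ₀ ≤ #α) (P : Setoid α) (b : α) :
    #(complements P) ≤ #α ^ #{x : α // ¬ P b x} := by
  classical
  set T := {x : α // ¬ P b x} with hT
  set B := {x : α // P b x} with hB
  -- uniqueness of the B-element in a Q-class
  have uniq : ∀ Q : complements P, ∀ x : α, ∀ y y' : B,
      (Q : Setoid α) x y → (Q : Setoid α) x y' → y = y' := by
    rintro ⟨Q, hQb, _⟩ x y y' h1 h2
    have hq : Q y y' := Setoid.trans' Q (Setoid.symm' Q h1) h2
    have hp : P (y : α) (y' : α) := Setoid.trans' P (Setoid.symm' P y.2) y'.2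
    exact Subtype.ext (inf_eq_bot_iff'.1 hQb y y' hp hq)
  -- the injection
  let Φ : complements P → (T → Set T × Option B) := fun Q t =>
    ({t' : T | (Q : Setoid α) t t'},
     if h : ∃ y : B, (Q : Setoid α) t y then some h.choose else none)
  have hc2 : ∀ (Q : complements P) (x : T) (y : B),
      (Φ Q x).2 = some y ↔ (Q : Setoid α) x y := by
    intro Q x y
    constructor
    · intro h
      by_cases hex : ∃ y : B, (Q : Setoid α) x y
      · have : (Φ Q x).2 = some hex.choose := dif_pos hex
        rw [this] at h
        have := hex.choose_spec
        rwa [Option.some_inj.1 h] at this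
      · rw [show (Φ Q x).2 = none from dif_neg hex] at h
        cases h
    · intro h
      have hex : ∃ y : B, (Q : Setoid α) x y := ⟨y, h⟩
      have h1 : (Φ Q x).2 = some hex.choose := dif_pos hex
      rw [h1, Option.some_inj]
      exact uniq Q x _ y hex.choose_spec h
  have hc3 : ∀ (Q : complements P) (x y : α), P b x → P b y →
      ((Q : Setoid α) x y ↔ x = y) := by
    rintro ⟨Q, hQb, _⟩ x y hx hy
    constructor
    · intro h
      exact inf_eq_bot_iff'.1 hQb x y (Setoid.trans' P (Setoid.symm' P hx) hy) h
    · rintro rfl; exact Setoid.refl' Q x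
  have hinj : Function.Injective Φ := by
    intro Q Q' hQQ
    apply Subtype.ext
    apply Setoid.ext
    show ∀ x y : α, (Q : Setoid α) x y ↔ (Q' : Setoid α) x y
    have main : ∀ x y : α, ¬ P b x → ((Q : Setoid α) x y ↔ (Q' : Setoid α) x y) := by
      intro x y hx
      by_cases hy : P b y
      · rw [← hc2 Q ⟨x, hx⟩ ⟨y, hy⟩, ← hc2 Q' ⟨x, hx⟩ ⟨y, hy⟩, hQQ]
      · have h1 := congrArg (fun f => (f ⟨x, hx⟩).1) hQQ
        constructor
        · intro h
          have : (⟨y, hy⟩ : T) ∈ (Φ Q ⟨x, hx⟩).1 := h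
          rw [hQQ] at this
          exact this
        · intro h
          have : (⟨y, hy⟩ : T) ∈ (Φ Q' ⟨x, hx⟩).1 := h
          rw [← hQQ] at this
          exact this
    intro x y
    by_cases hx : P b x
    · by_cases hy : P b y
      · rw [hc3 Q x y hx hy, hc3 Q' x y hx hy]
      · rw [Setoid.comm' (Q : Setoid α), Setoid.comm' (Q' : Setoid α)]
        exact main y x hy
    · exact main x y hx
  -- cardinality computation
  have step1 : #(complements P) ≤ #(T → Set T × Option B) := Cardinal.mk_le_of_injective hinj
  refine step1.trans ?_
  rw [← Cardinal.power_def]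
  rcases eq_or_ne (#T) 0 with hT0 | hT0
  · rw [hT0]; simp
  have hbase : #(Set T × Option B) ≤ #α ^ #T := by
    have h1 : #(Set T × Option B) = 2 ^ #T * (#B + 1) := by
      rw [Cardinal.mk_prod, Cardinal.lift_id, Cardinal.lift_id, Cardinal.mk_set, Cardinal.mk_option]
    rw [h1]
    · have h2 : (2 : Cardinal) ^ #T ≤ #α ^ #T :=
        Cardinal.power_le_power_right (two_le_k hα)
      have h3 : #B + 1 ≤ #α ^ #T := by
        have : #B + 1 ≤ #α := by
          calc #B + 1 ≤ #α + 1 := by gcongr; exact Cardinal.mk_subtype_le _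
            _ = max #α 1 := Cardinal.add_eq_max hα
            _ ≤ #α := max_le le_rfl (Cardinal.one_le_aleph0.trans hα)
        exact this.trans (Cardinal.self_le_power _ (Cardinal.one_le_iff_ne_zero.2 hT0))
      calc 2 ^ #T * (#B + 1) ≤ #α ^ #T * #α ^ #T := mul_le_mul' h2 h3
        _ = #α ^ #T := pow_absorb hα _
  calc #(Set T × Option B) ^ #T ≤ (#α ^ #T) ^ #T := Cardinal.power_le_power_right hbase
    _ = #α ^ #T := pow_pow_absorb hα _

lemma lower_L1 (hα : ℵ₀ ≤ #α) (P : Setoid α) (b : α)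
    (hle : #{x : α // ¬ P b x} ≤ #{x : α // P b x}) :
    #α ^ #{x : α // ¬ P b x} ≤ #(complements P) := by
  classical
  set T := {x : α // ¬ P b x} with hT
  set B := {x : α // P b x} with hB
  have hsum : #B + #T = #α := by
    have := Cardinal.mk_sum_compl {x : α | P b x}
    convert this using 2 <;> rfl
  have hBinf : ℵ₀ ≤ #B := by
    by_contra hfin
    push_neg at hfin
    have : #α < ℵ₀ := by
      rw [← hsum]
      exact Cardinal.add_lt_aleph0 hfin (hle.trans_lt hfin)
    exact absurd hα this.not_ge
  have hBk : #B = #α := by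
    refine le_antisymm (Cardinal.mk_subtype_le _) ?_
    rw [← hsum]
    calc #B + #T ≤ #B + #B := by gcongr
      _ = #B := Cardinal.add_eq_self hBinf
  have hι : #(T × B) ≤ #B := by
    rw [Cardinal.mk_prod, Cardinal.lift_id, Cardinal.lift_id]
    calc #T * #B ≤ #B * #B := by gcongr
      _ = #B := Cardinal.mul_eq_self hBinf
  obtain ⟨ι⟩ := Cardinal.le_def _ _ |>.mp hι
  -- the family of complements
  let r : (T → B) → α → α := fun g x => if h : P b x then x else (ι (⟨x, h⟩, g ⟨x, h⟩) : α)
  have hrB : ∀ g x, P b (r g x) := by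
    intro g x
    by_cases h : P b x
    · simpa [r, dif_pos h] using h
    · simp only [r, dif_neg h]
      exact (ι (⟨x, h⟩, g ⟨x, h⟩)).2
  have hrid : ∀ g x, r g (r g x) = r g x := by
    intro g x
    simp only [r, dif_pos (hrB g x)]
  have hrT : ∀ g (t : T), r g t = (ι (t, g t) : α) := by
    intro g t
    simp only [r, dif_neg t.2]
    rfl
  have hmem : ∀ g : T → B, Setoid.ker (r g) ∈ complements P := by
    intro g
    constructor
    · rw [inf_eq_bot_iff']
      intro x y hp hq
      rw [Setoid.ker_def] at hq
      by_cases hx : P b x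
      · by_cases hy : P b y
        · rwa [show r g x = x from dif_pos hx, show r g y = y from dif_pos hy] at hq
        · exact absurd (Setoid.trans' P hx hp) hy
      · by_cases hy : P b y
        · exact absurd (Setoid.trans' P hy (Setoid.symm' P hp)) hx
        · rw [show r g x = (ι (⟨x, hx⟩, g ⟨x, hx⟩) : α) from dif_neg hx,
            show r g y = (ι (⟨y, hy⟩, g ⟨y, hy⟩) : α) from dif_neg hy] at hq
          have := ι.injective (Subtype.ext hq)
          have := congrArg (fun p => (p.1 : α)) this
          exact this
    · apply sup_eq_top_of_rel_all b
      intro x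
      have h1 : Setoid.ker (r g) x (r g x) := by
        rw [Setoid.ker_def]
        exact (hrid g x).symm
      have h2 : P (r g x) b := Setoid.symm' P (hrB g x)
      exact Setoid.trans' _ (rel_sup_right h1) (rel_sup_left h2)
  let Ψ : (T → B) → complements P := fun g => ⟨Setoid.ker (r g), hmem g⟩
  have hinj : Function.Injective Ψ := by
    intro g g' hgg
    funext t
    have h1 : Setoid.ker (r g) t (ι (t, g t) : α) := by
      rw [Setoid.ker_def, hrT g t, show r g (ι (t, g t) : α) = _ from dif_pos (ι (t, g t)).2]
    have h2 : Setoid.ker (r g') t (ι (t, g t) : α) := by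
      have heq : Setoid.ker (r g) = Setoid.ker (r g') :=
        congrArg (fun Q : complements P => (Q : Setoid α)) hgg
      rw [← heq]
      exact h1
    rw [Setoid.ker_def, hrT g' t, show r g' (ι (t, g t) : α) = _ from dif_pos (ι (t, g t)).2] at h2
    have := ι.injective (Subtype.ext h2)
    have := congrArg Prod.snd this
    exact this.symm
  calc #α ^ #T = #B ^ #T := by rw [hBk]
    _ = #(T → B) := Cardinal.power_def _ _
    _ ≤ #(complements P) := Cardinal.mk_le_of_injective hinj

section Defs
variable (P : Setoid α) (a b : α) (M : Set (α × α))

/-- elements that are not class representatives and not in the class of `a`. -/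
def RsetD : Set α := {x | x ≠ (Quotient.mk P x).out ∧ Quotient.mk P x ≠ Quotient.mk P a}

/-- a partial matching on `RsetD` with pairwise inequivalent entries. -/
def GoodM : Prop :=
  (∀ p ∈ M, p.1 ∈ RsetD P a ∧ p.2 ∈ RsetD P a ∧ ¬ P p.1 p.2) ∧
  ∀ p ∈ M, ∀ q ∈ M, p ≠ q → p.1 ≠ q.1 ∧ p.1 ≠ q.2 ∧ p.2 ≠ q.1 ∧ p.2 ≠ q.2

open Classical in
noncomputable def rfun (g : {q : Quotient P // q ≠ Quotient.mk P a} → Bool) (h : M → Bool)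
    (x : α) : α :=
  if x = a ∨ x = b then x
  else if hq : Quotient.mk P x = Quotient.mk P a then x
  else if x = (Quotient.mk P x).out then (if g ⟨Quotient.mk P x, hq⟩ then b else a)
  else if hm : ∃ m : M, x = (m : α × α).1 then
    (if h hm.choose then ((hm.choose : α × α)).2 else x)
  else x

variable {P a b M}
variable {g : {q : Quotient P // q ≠ Quotient.mk P a} → Bool} {h : M → Bool}

lemma rfun_a : rfun P a b M g h a = a := by
  unfold rfun; rw [if_pos (Or.inl rfl)]

lemma rfun_b : rfun P a b M g h b = b := by
  unfold rfun; rw [if_pos (Or.inr rfl)]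

lemma rfun_out (hab : P a b) (q : Quotient P) (hq : q ≠ Quotient.mk P a) :
    rfun P a b M g h q.out = if g ⟨q, hq⟩ then b else a := by
  have hout : Quotient.mk P q.out = q := Quotient.out_eq q
  have h1 : ¬(q.out = a ∨ q.out = b) := by
    rintro (h | h)
    · exact hq (by rw [← hout, h])
    · exact hq (by rw [← hout, h]; exact Quotient.sound (Setoid.symm' P hab))
  have h2 : ¬(Quotient.mk P q.out = Quotient.mk P a) := by rw [hout]; exact hq
  have h3 : q.out = (Quotient.mk P q.out).out := by rw [hout]
  unfold rfun
  rw [if_neg h1, dif_neg h2, if_pos h3]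
  have hsub : (⟨Quotient.mk P q.out, h2⟩ : {q : Quotient P // q ≠ Quotient.mk P a}) = ⟨q, hq⟩ :=
    Subtype.ext hout
  rw [hsub]

lemma rfun_fst (hM : GoodM P a M) (hab : P a b) (m : M) :
    rfun P a b M g h (m : α × α).1 = if h m then (m : α × α).2 else (m : α × α).1 := by
  classical
  obtain ⟨hr1, hr2, hnp⟩ := hM.1 _ m.2
  have hx1 : ¬((m : α × α).1 = a ∨ (m : α × α).1 = b) := by
    rintro (h1 | h1)
    · exact hr1.2 (by rw [h1])
    · exact hr1.2 (by rw [h1]; exact Quotient.sound (Setoid.symm' P hab))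
  have hex : ∃ m' : M, (m : α × α).1 = (m' : α × α).1 := ⟨m, rfl⟩
  have hch : hex.choose = m := by
    by_contra hne
    have hvne : (hex.choose : α × α) ≠ (m : α × α) := by
      intro hv; exact hne (Subtype.ext hv)
    have := (hM.2 _ (hex.choose).2 _ m.2 hvne).1
    exact this hex.choose_spec.symm
  unfold rfun
  rw [if_neg hx1, dif_neg hr1.2, if_neg hr1.1, dif_pos hex, hch]

lemma rfun_snd (hM : GoodM P a M) (hab : P a b) (m : M) :
    rfun P a b M g h (m : α × α).2 = (m : α × α).2 := by
  classical
  obtain ⟨hr1, hr2, hnp⟩ := hM.1 _ m.2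
  have hx1 : ¬((m : α × α).2 = a ∨ (m : α × α).2 = b) := by
    rintro (h1 | h1)
    · exact hr2.2 (by rw [h1])
    · exact hr2.2 (by rw [h1]; exact Quotient.sound (Setoid.symm' P hab))
  have hex : ¬ ∃ m' : M, (m : α × α).2 = (m' : α × α).1 := by
    rintro ⟨m', hm'⟩
    by_cases hmm : (m' : α × α) = (m : α × α)
    · rw [hmm] at hm'
      exact hnp (hm' ▸ Setoid.refl' P _)
    · exact (hM.2 _ m'.2 _ m.2 hmm).2.1 hm'.symm
  unfold rfun
  rw [if_neg hx1, dif_neg hr2.2, if_neg hr2.1, dif_neg hex]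

lemma rfun_cases (x : α) :
    rfun P a b M g h x = x ∨
    (x = (Quotient.mk P x).out ∧ Quotient.mk P x ≠ Quotient.mk P a ∧
      (rfun P a b M g h x = a ∨ rfun P a b M g h x = b)) ∨
    (∃ m : M, x = (m : α × α).1 ∧ rfun P a b M g h x = (m : α × α).2) := by
  classical
  unfold rfun
  by_cases h1 : x = a ∨ x = b
  · rw [if_pos h1]; exact Or.inl rfl
  rw [if_neg h1]
  by_cases h2 : Quotient.mk P x = Quotient.mk P a
  · rw [dif_pos h2]; exact Or.inl rfl
  rw [dif_neg h2]
  by_cases h3 : x = (Quotient.mk P x).out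
  · rw [if_pos h3]
    refine Or.inr (Or.inl ⟨h3, h2, ?_⟩)
    by_cases hg : g ⟨Quotient.mk P x, h2⟩
    · rw [if_pos hg]; exact Or.inr rfl
    · rw [if_neg hg]; exact Or.inl rfl
  rw [if_neg h3]
  by_cases h4 : ∃ m : M, x = (m : α × α).1
  · rw [dif_pos h4]
    by_cases hh : h h4.choose
    · rw [if_pos hh]
      exact Or.inr (Or.inr ⟨h4.choose, h4.choose_spec, rfl⟩)
    · rw [if_neg hh]; exact Or.inl rfl
  · rw [dif_neg h4]; exact Or.inl rfl


lemma rfun_ker_mem (hM : GoodM P a M) (hab : P a b) :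
    Setoid.ker (rfun P a b M g h) ∈ complements P := by
  constructor
  · rw [inf_eq_bot_iff']
    intro x y hp hq
    rw [Setoid.ker_def] at hq
    have hxy : Quotient.mk P x = Quotient.mk P y := Quotient.sound hp
    rcases rfun_cases (g := g) (h := h) (b := b) x with hx | ⟨hox, hqx, hvx⟩ | ⟨m, hm1, hm2⟩ <;>
      rcases rfun_cases (g := g) (h := h) (b := b) y with hy | ⟨hoy, hqy, hvy⟩ | ⟨m', hm1', hm2'⟩
    · rw [← hx, ← hy]; exact hq
    · rcases hvy with hv | hv
      · have hxa : x = a := by rw [← hx, hq, hv]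
        exact absurd (by rw [← hxy, hxa] : Quotient.mk P y = Quotient.mk P a) hqy
      · have hxb : x = b := by rw [← hx, hq, hv]
        refine absurd ?_ hqy
        rw [← hxy, hxb]
        exact Quotient.sound (Setoid.symm' P hab)
    · have hxm : x = (m' : α × α).2 := by rw [← hx, hq, hm2']
      refine absurd ?_ ((hM.1 _ m'.2).2.2)
      apply Setoid.symm' P
      rw [← hxm, ← hm1']
      exact hp
    · rcases hvx with hv | hv
      · have hya : y = a := by rw [← hy, ← hq, hv]
        exact absurd (by rw [hxy, hya] : Quotient.mk P x = Quotient.mk P a) hqx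
      · have hyb : y = b := by rw [← hy, ← hq, hv]
        refine absurd ?_ hqx
        rw [hxy, hyb]
        exact Quotient.sound (Setoid.symm' P hab)
    · rw [hox, hoy, hxy]
    · rcases hvx with hv | hv
      · refine absurd ?_ ((hM.1 _ m'.2).2.1.2)
        rw [← hm2', ← hq, hv]
      · refine absurd ?_ ((hM.1 _ m'.2).2.1.2)
        rw [← hm2', ← hq, hv]
        exact Quotient.sound (Setoid.symm' P hab)
    · have hym : y = (m : α × α).2 := by rw [← hy, ← hq, hm2]
      refine absurd ?_ ((hM.1 _ m.2).2.2)
      rw [← hm1, ← hym]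
      exact hp
    · rcases hvy with hv | hv
      · refine absurd ?_ ((hM.1 _ m.2).2.1.2)
        rw [← hm2, hq, hv]
      · refine absurd ?_ ((hM.1 _ m.2).2.1.2)
        rw [← hm2, hq, hv]
        exact Quotient.sound (Setoid.symm' P hab)
    · by_cases hmm : (m : α × α) = (m' : α × α)
      · rw [hm1, hm1', hmm]
      · refine absurd ?_ ((hM.2 _ m.2 _ m'.2 hmm).2.2.2)
        rw [← hm2, ← hm2', hq]
  · apply sup_eq_top_of_rel_all a
    intro x
    by_cases hq : Quotient.mk P x = Quotient.mk P a
    · exact rel_sup_left (Quotient.eq.mp hq)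
    · have hPox : P (Quotient.mk P x).out x :=
        Quotient.eq.mp (Quotient.out_eq (Quotient.mk P x))
      have hro := rfun_out (g := g) (h := h) hab (Quotient.mk P x) hq
      by_cases hg : g ⟨Quotient.mk P x, hq⟩
      · have h1 : Setoid.ker (rfun P a b M g h) (Quotient.mk P x).out b := by
          rw [Setoid.ker_def, hro, if_pos hg, rfun_b]
        refine Setoid.trans' _ (rel_sup_left (Setoid.symm' P hPox)) ?_
        exact Setoid.trans' _ (rel_sup_right h1) (rel_sup_left (Setoid.symm' P hab))
      · have h1 : Setoid.ker (rfun P a b M g h) (Quotient.mk P x).out a := by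
          rw [Setoid.ker_def, hro, if_neg hg, rfun_a]
        exact Setoid.trans' _ (rel_sup_left (Setoid.symm' P hPox)) (rel_sup_right h1)

lemma rfun_inj (hM : GoodM P a M) (hab : P a b) (hne : a ≠ b)
    {g g' : {q : Quotient P // q ≠ Quotient.mk P a} → Bool} {h h' : M → Bool}
    (heq : Setoid.ker (rfun P a b M g h) = Setoid.ker (rfun P a b M g' h')) :
    g = g' ∧ h = h' := by
  constructor
  · funext q
    have h1 : (Setoid.ker (rfun P a b M g h)) q.1.out a ↔ g q = false := by
      rw [Setoid.ker_def, rfun_out hab q.1 q.2, rfun_a]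
      rcases Bool.eq_false_or_eq_true (g q) with hb | hb <;> simp [hb, hne, Ne.symm hne]
    have h2 : (Setoid.ker (rfun P a b M g' h')) q.1.out a ↔ g' q = false := by
      rw [Setoid.ker_def, rfun_out hab q.1 q.2, rfun_a]
      rcases Bool.eq_false_or_eq_true (g' q) with hb | hb <;> simp [hb, hne, Ne.symm hne]
    rw [heq, h2] at h1
    rcases Bool.eq_false_or_eq_true (g' q) with hb | hb <;>
      rcases Bool.eq_false_or_eq_true (g q) with hb' | hb' <;> simp_all
  · funext m
    have hfst : (m : α × α).1 ≠ (m : α × α).2 := by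
      intro hc
      exact (hM.1 _ m.2).2.2 (hc ▸ Setoid.refl' P _)
    have h1 : (Setoid.ker (rfun P a b M g h)) (m : α × α).1 (m : α × α).2 ↔ h m = true := by
      rw [Setoid.ker_def, rfun_fst hM hab m, rfun_snd hM hab m]
      rcases Bool.eq_false_or_eq_true (h m) with hb | hb <;> simp [hb, hfst]
    have h2 : (Setoid.ker (rfun P a b M g' h')) (m : α × α).1 (m : α × α).2 ↔ h' m = true := by
      rw [Setoid.ker_def, rfun_fst hM hab m, rfun_snd hM hab m]
      rcases Bool.eq_false_or_eq_true (h' m) with hb | hb <;> simp [hb, hfst]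
    rw [heq, h2] at h1
    rcases Bool.eq_false_or_eq_true (h' m) with hb | hb <;>
      rcases Bool.eq_false_or_eq_true (h m) with hb' | hb' <;> simp_all

end Defs

lemma lower_caseB (hα : ℵ₀ ≤ #α) (P : Setoid α) (a b : α) (hab : P a b) (hne : a ≠ b)
    (hsmall : ∀ c : α, #{x : α // P c x} < #α) :
    2 ^ #α ≤ #(complements P) := by
  classical
  have hz : ∃ m, Maximal (· ∈ {M : Set (α × α) | GoodM P a M}) m := by
    apply zorn_subset
    intro c hc hchain
    refine ⟨⋃₀ c, ⟨?_, ?_⟩, fun s hs => Set.subset_sUnion_of_mem hs⟩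
    · rintro p ⟨s, hs, hp⟩
      exact (hc hs).1 p hp
    · rintro p ⟨s, hs, hp⟩ q ⟨s', hs', hq⟩ hpq
      rcases hchain.total hs hs' with hss | hss
      · exact (hc hs').2 p (hss hp) q hq hpq
      · exact (hc hs).2 p hp q (hss hq) hpq
  obtain ⟨M, hMmax⟩ := hz
  have hM : GoodM P a M := hMmax.prop
  set qa := Quotient.mk P a with hqa
  set J := {q : Quotient P // q ≠ qa} with hJ
  set Uset := {x : α | x ∈ RsetD P a ∧ ∀ p ∈ M, x ≠ p.1 ∧ x ≠ p.2} with hUset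
  have hUrel : ∀ u ∈ Uset, ∀ v ∈ Uset, u ≠ v → P u v := by
    intro u hu v hv huv
    by_contra hPuv
    have hgood : GoodM P a (insert (u, v) M) := by
      constructor
      · intro p hp
        rcases Set.mem_insert_iff.mp hp with rfl | hp
        · exact ⟨hu.1, hv.1, hPuv⟩
        · exact hM.1 p hp
      · intro p hp q hq hpq
        rcases Set.mem_insert_iff.mp hp with rfl | hp <;>
          rcases Set.mem_insert_iff.mp hq with rfl | hq
        · exact absurd rfl hpq
        · exact ⟨(hu.2 q hq).1, (hu.2 q hq).2, (hv.2 q hq).1, (hv.2 q hq).2⟩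
        · exact ⟨((hu.2 p hp).1).symm, ((hv.2 p hp).1).symm, ((hu.2 p hp).2).symm,
            ((hv.2 p hp).2).symm⟩
        · exact hM.2 p hp q hq hpq
    have hsub : insert (u, v) M ⊆ M := hMmax.2 hgood (Set.subset_insert _ _)
    exact (hu.2 (u, v) (hsub (Set.mem_insert _ _))).1 rfl
  set C := {x : α | ∃ m : M, x = (m : α × α).1 ∨ x = (m : α × α).2} with hC
  set X := {x : α | x = (Quotient.mk P x).out} with hX
  set A := {x : α | P a x} with hA
  have hcover : (Set.univ : Set α) ⊆ X ∪ A ∪ C ∪ Uset := by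
    intro x _
    by_cases h1 : x = (Quotient.mk P x).out
    · exact Or.inl (Or.inl (Or.inl h1))
    by_cases h2 : Quotient.mk P x = qa
    · refine Or.inl (Or.inl (Or.inr ?_))
      exact Setoid.symm' P (Quotient.eq.mp h2)
    by_cases h3 : ∃ m : M, x = (m : α × α).1 ∨ x = (m : α × α).2
    · exact Or.inl (Or.inr h3)
    · refine Or.inr ⟨⟨h1, h2⟩, fun p hp => ?_⟩
      exact ⟨fun hc => h3 ⟨⟨p, hp⟩, Or.inl hc⟩, fun hc => h3 ⟨⟨p, hp⟩, Or.inr hc⟩⟩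
  have hXle : #X ≤ #(Quotient P) := by
    refine Cardinal.mk_le_of_injective (f := fun x : X => Quotient.mk P x.1) ?_
    intro x y hxy
    dsimp only at hxy
    apply Subtype.ext
    have hx := x.2
    have hy := y.2
    rw [Set.mem_setOf_eq] at hx hy
    rw [hx, hy, hxy]
  have hAlt : #A < #α := hsmall a
  have hCle : #C ≤ #↥M + #↥M := by
    have : #(↥M ⊕ ↥M) = #↥M + #↥M := by simp
    rw [← this]
    refine Cardinal.mk_le_of_injective
      (f := fun x : C => if x.1 = (x.2.choose : α × α).1 then Sum.inl x.2.choose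
        else Sum.inr x.2.choose) ?_
    intro x y hxy
    dsimp only at hxy
    apply Subtype.ext
    by_cases hx : x.1 = (x.2.choose : α × α).1 <;> by_cases hy : y.1 = (y.2.choose : α × α).1
    · rw [if_pos hx] at hxy; rw [if_pos hy] at hxy
      rw [hx, hy, Sum.inl.inj hxy]
    · rw [if_pos hx, if_neg hy] at hxy; exact absurd hxy (by simp)
    · rw [if_neg hx, if_pos hy] at hxy; exact absurd hxy (by simp)
    · rw [if_neg hx] at hxy; rw [if_neg hy] at hxy
      have hx2 : x.1 = (x.2.choose : α × α).2 := x.2.choose_spec.resolve_left hx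
      have hy2 : y.1 = (y.2.choose : α × α).2 := y.2.choose_spec.resolve_left hy
      rw [hx2, hy2, Sum.inr.inj hxy]
  have hUlt : #Uset < #α := by
    rcases Set.eq_empty_or_nonempty Uset with he | ⟨c, hc⟩
    · rw [he]
      simpa using (Cardinal.aleph0_pos.trans_le hα)
    · have hsub : Uset ⊆ {x : α | P c x} := by
        intro u hu
        by_cases huc : u = c
        · rw [huc]; exact Setoid.refl' P c
        · exact Setoid.symm' P (hUrel u hu c hc huc)
      exact (Cardinal.mk_le_mk_of_subset hsub).trans_lt (hsmall c)
  have hQeq : #(Quotient P) = #J + 1 := by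
    have h1 := Cardinal.mk_sum_compl ({qa} : Set (Quotient P))
    rw [Cardinal.mk_singleton] at h1
    have h2 : #(↥({qa}ᶜ : Set (Quotient P))) = #J := by
      refine Cardinal.mk_congr (Equiv.subtypeEquivRight ?_)
      intro q
      simp [Set.mem_compl_iff]
    rw [h2] at h1
    rw [← h1, add_comm]
  have hmain : #α ≤ #J + #↥M := by
    by_contra hcon
    push_neg at hcon
    have hJlt : #J < #α := (self_le_add_right _ _).trans_lt hcon
    have hMlt : #↥M < #α := (self_le_add_left _ _).trans_lt hcon
    have h1lt : (1 : Cardinal) < #α := Cardinal.one_lt_aleph0.trans_le hα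
    have hQlt : #(Quotient P) < #α := by
      rw [hQeq]; exact Cardinal.add_lt_of_lt hα hJlt h1lt
    have hfinal : #α < #α := by
      calc #α = #(Set.univ : Set α) := Cardinal.mk_univ.symm
        _ ≤ #↥(X ∪ A ∪ C ∪ Uset) := Cardinal.mk_le_mk_of_subset hcover
        _ ≤ #↥(X ∪ A ∪ C) + #Uset := Cardinal.mk_union_le _ _
        _ ≤ (#↥(X ∪ A) + #C) + #Uset := by gcongr; exact Cardinal.mk_union_le _ _
        _ ≤ ((#X + #A) + #C) + #Uset := by gcongr; exact Cardinal.mk_union_le _ _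
        _ < #α := by
            refine Cardinal.add_lt_of_lt hα (Cardinal.add_lt_of_lt hα
              (Cardinal.add_lt_of_lt hα (hXle.trans_lt hQlt) hAlt) ?_) hUlt
            exact (hCle.trans_lt (Cardinal.add_lt_of_lt hα hMlt hMlt))
    exact absurd hfinal (lt_irrefl _)
  let Φ : ((J → Bool) × (↥M → Bool)) → ↥(complements P) := fun gh =>
    ⟨Setoid.ker (rfun P a b M gh.1 gh.2), rfun_ker_mem hM hab⟩
  have hΦ : Function.Injective Φ := by
    intro gh gh' h
    have hker : Setoid.ker (rfun P a b M gh.1 gh.2) = Setoid.ker (rfun P a b M gh'.1 gh'.2) :=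
      congrArg Subtype.val h
    have := rfun_inj hM hab hne hker
    exact Prod.ext this.1 this.2
  calc 2 ^ #α ≤ 2 ^ (#J + #↥M) := Cardinal.power_le_power_left two_ne_zero hmain
    _ = 2 ^ #J * 2 ^ #↥M := Cardinal.power_add _ _ _
    _ = #(J → Bool) * #(↥M → Bool) := by
        have hJb : #(J → Bool) = 2 ^ #J := by
          rw [← Cardinal.mk_set]
          exact Cardinal.mk_congr (Equiv.arrowCongr (Equiv.refl _) Equiv.propEquivBool.symm)
        have hMb : #(↥M → Bool) = 2 ^ #↥M := by
          rw [← Cardinal.mk_set]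
          exact Cardinal.mk_congr (Equiv.arrowCongr (Equiv.refl _) Equiv.propEquivBool.symm)
        rw [hJb, hMb]
    _ = #((J → Bool) × (↥M → Bool)) := by
        rw [Cardinal.mk_prod, Cardinal.lift_id, Cardinal.lift_id]
    _ ≤ #↥(complements P) := Cardinal.mk_le_of_injective hΦ


lemma exists_two_block (hα : ℵ₀ ≤ #α) (lam : Cardinal.{u}) (hlam : lam ≤ #α) (hne : lam ≠ 0) :
    ∃ P : Setoid α, #(complements P) = #α ^ lam := by
  classical
  -- split α into two halves
  have hsum : #(α ⊕ α) = #α := by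
    rw [Cardinal.mk_sum]
    simp only [Cardinal.lift_id]
    exact Cardinal.add_eq_self hα
  obtain ⟨e⟩ := Cardinal.eq.mp hsum
  set S₁ : Set α := e '' (Set.range Sum.inl) with hS₁
  have hS₁c : S₁ᶜ = e '' (Set.range Sum.inr) := by
    rw [hS₁, ← Set.image_compl_eq e.bijective, Set.compl_range_inl]
  have hS₁card : #↥S₁ = #α := by
    rw [hS₁, Cardinal.mk_image_eq e.injective, Cardinal.mk_range_eq _ Sum.inl_injective]
  have hS₁ccard : #↥(S₁ᶜ) = #α := by
    rw [hS₁c, Cardinal.mk_image_eq e.injective, Cardinal.mk_range_eq _ Sum.inr_injective]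
  obtain ⟨S, hSsub, hScard⟩ := Cardinal.le_mk_iff_exists_subset.mp (hlam.trans_eq hS₁card.symm)
  have hSc : #↥(Sᶜ) = #α := by
    refine le_antisymm (Cardinal.mk_subtype_le _) ?_
    rw [← hS₁ccard]
    exact Cardinal.mk_le_mk_of_subset (Set.compl_subset_compl.mpr hSsub)
  -- the two block partition
  set P : Setoid α := Setoid.ker (fun x => x ∈ S) with hP
  have hbex : Nonempty ↥(Sᶜ) := by
    rw [← Cardinal.mk_ne_zero_iff, hSc]
    exact (Cardinal.aleph0_pos.trans_le hα).ne'
  obtain ⟨b, hb⟩ := hbex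
  have hTeq : #{x : α // ¬ P b x} = lam := by
    rw [← hScard]
    refine Cardinal.mk_congr (Equiv.subtypeEquivRight ?_)
    intro x
    show ¬ Setoid.ker (fun x => x ∈ S) b x ↔ x ∈ S
    rw [Setoid.ker_def, eq_iff_iff]
    simp [show b ∉ S from hb]
  have hBeq : #{x : α // P b x} = #α := by
    rw [← hSc]
    refine Cardinal.mk_congr (Equiv.subtypeEquivRight ?_)
    intro x
    show Setoid.ker (fun x => x ∈ S) b x ↔ x ∈ Sᶜ
    rw [Setoid.ker_def, eq_iff_iff]
    simp [show b ∉ S from hb]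
  refine ⟨P, le_antisymm ?_ ?_⟩
  · have := mk_complements_le hα P b
    rwa [hTeq] at this
  · have := lower_L1 hα P b (by rw [hTeq, hBeq]; exact hlam)
    rwa [hTeq] at this

/-- For every infinite cardinal κ and every cardinal `λ ≤ κ`, some partition of κ has
exactly `κ^λ` complements; moreover every partition of κ has `κ^λ` complements for
some `λ ≤ κ`. -/
theorem stmt_18 {α : Type u} (hα : Cardinal.aleph0 ≤ Cardinal.mk α) :
    (∀ lam : Cardinal.{u}, lam ≤ Cardinal.mk α →
      ∃ P : Setoid α, Cardinal.mk (complements P) = Cardinal.mk α ^ lam) ∧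
    (∀ P : Setoid α, ∃ lam : Cardinal.{u}, lam ≤ Cardinal.mk α ∧
      Cardinal.mk (complements P) = Cardinal.mk α ^ lam) := by
  constructor
  · intro lam hlam
    rcases eq_or_ne lam 0 with rfl | hne
    · refine ⟨⊥, ?_⟩
      rw [complements_bot, Cardinal.mk_singleton, Cardinal.power_zero]
    · exact exists_two_block hα lam hlam hne
  · intro P
    by_cases hbot : P = ⊥
    · refine ⟨0, zero_le, ?_⟩
      rw [hbot, complements_bot, Cardinal.mk_singleton, Cardinal.power_zero]
    · obtain ⟨a, b, hab, hne⟩ := exists_pair_of_ne_bot hbot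
      by_cases hbig : ∃ c : α, #{x : α // ¬ P c x} ≤ #{x : α // P c x}
      · obtain ⟨c, hc⟩ := hbig
        refine ⟨#{x : α // ¬ P c x}, Cardinal.mk_subtype_le _, ?_⟩
        exact le_antisymm (mk_complements_le hα P c) (lower_L1 hα P c hc)
      · push_neg at hbig
        have hsmall : ∀ c : α, #{x : α // P c x} < #α :=
          fun c => (hbig c).trans_le (Cardinal.mk_subtype_le _)
        refine ⟨#α, le_rfl, le_antisymm ?_ ?_⟩
        · refine (mk_complements_le hα P a).trans ?_
          exact Cardinal.power_le_power_left
            (Cardinal.aleph0_pos.trans_le hα).ne' (Cardinal.mk_subtype_le _)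
        · rw [Cardinal.power_self_eq hα]
          exact lower_caseB hα P a b hab hne hsmall

end Main
end
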